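/- arXiv:1401.1519 — 5 statements merged into one kernel-verified Lean document; each statement's English description precedes it below -/
import Mathlib

section
/- For every z in the unit disk, the L² norm of the Green function of the Laplacian on 𝔻 with pole at z is at most the L² norm of the Green function with pole at 0; equivalently ∫_{𝔻} log²|(w−z)/(1−\bar z w)| dA(w) ≤ ∫_{𝔻} log²|w| dA(w). -/
open MeasureTheory Metric Real Complex

noncomputable def gPsi (z u : ℂ) : ℂ := (u + z) / (1 + (starRingEnd ℂ) z * u)

noncomputable def gPsiD (z u : ℂ) : ℂ :=
  (1 - (Complex.normSq z : ℂ)) / (1 + (starRingEnd ℂ) z * u)^2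

lemma green_sq_abs_lt {z : ℂ} (hz : ‖z‖ < 1) : z.re^2 + z.im^2 < 1 := by
  have h := Complex.sq_norm z
  rw [Complex.normSq_apply] at h
  nlinarith [norm_nonneg z, hz]

lemma green_norm_lt_of_normSq {a b : ℂ} {r : ℝ} (hr : 0 ≤ r)
    (h : Complex.normSq a < r^2 * Complex.normSq b) : ‖a‖ < r * ‖b‖ := by
  apply lt_of_pow_lt_pow_left₀ 2 (by positivity : (0:ℝ) ≤ r * ‖b‖)
  rw [mul_pow, Complex.sq_norm, Complex.sq_norm]
  exact h

lemma green_den_ne {z u : ℂ} (hz : ‖z‖ < 1) (hu : ‖u‖ < 1) :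
    1 + (starRingEnd ℂ) z * u ≠ 0 := by
  intro h
  have h1 : ‖(starRingEnd ℂ) z * u‖ < 1 := by
    rw [norm_mul, RCLike.norm_conj]; nlinarith [norm_nonneg z, norm_nonneg u]
  have : (starRingEnd ℂ) z * u = -1 := by linear_combination h
  rw [this] at h1; simp at h1

lemma green_den_ne' {z w : ℂ} (hz : ‖z‖ < 1) (hw : ‖w‖ < 1) :
    1 - (starRingEnd ℂ) z * w ≠ 0 := by
  have := green_den_ne hz (u := -w) (by simpa using hw)
  simpa [mul_neg, sub_eq_add_neg] using this

lemma green_hasDeriv {z : ℂ} (hz : ‖z‖ < 1) {u : ℂ} (hu : ‖u‖ < 1) :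
    HasDerivAt (gPsi z) (gPsiD z u) u := by
  have hden := green_den_ne hz hu
  have h1 : HasDerivAt (fun u : ℂ => u + z) 1 u := (hasDerivAt_id u).add_const z
  have h2 : HasDerivAt (fun u : ℂ => 1 + (starRingEnd ℂ) z * u) ((starRingEnd ℂ) z) u := by
    simpa using ((hasDerivAt_id u).const_mul ((starRingEnd ℂ) z)).const_add 1
  have := h1.div h2 hden
  have e : gPsiD z u = (1 * (1 + (starRingEnd ℂ) z * u) - (u + z) * (starRingEnd ℂ) z)
      / (1 + (starRingEnd ℂ) z * u) ^ 2 := by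
    rw [gPsiD, Complex.normSq_eq_conj_mul_self]
    congr 1
    ring
  rw [e]
  exact this

lemma green_det (c : ℂ) :
    ContinuousLinearMap.det (((1 : ℂ →L[ℂ] ℂ).smulRight c).restrictScalars ℝ)
      = Complex.normSq c := by
  have h : ((((1 : ℂ →L[ℂ] ℂ).smulRight c).restrictScalars ℝ : ℂ →L[ℝ] ℂ) : ℂ →ₗ[ℝ] ℂ)
      = Algebra.lmul ℝ ℂ c := by
    ext w
    simp [mul_comm]
  rw [ContinuousLinearMap.det, h, ← Algebra.norm_apply, Algebra.norm_complex_apply]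

lemma green_gPsi_mem {z u : ℂ} (hz : ‖z‖ < 1) (hu : ‖u‖ < 1) : ‖gPsi z u‖ < 1 := by
  have hd := green_den_ne hz hu
  rw [gPsi, norm_div, div_lt_one (norm_pos_iff.mpr hd)]
  have hz2 := green_sq_abs_lt hz
  have hu2 := green_sq_abs_lt hu
  have h2 : Complex.normSq (u + z) < 1^2 * Complex.normSq (1 + (starRingEnd ℂ) z * u) := by
    simp only [Complex.normSq_apply, Complex.add_re, Complex.add_im, Complex.one_re,
      Complex.one_im, Complex.mul_re, Complex.mul_im, Complex.conj_re, Complex.conj_im,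
      one_pow, one_mul]
    nlinarith [mul_pos (by linarith : (0:ℝ) < 1 - (z.re^2+z.im^2))
      (by linarith : (0:ℝ) < 1 - (u.re^2+u.im^2))]
  simpa using green_norm_lt_of_normSq zero_le_one h2

lemma green_gPhi_mem {z w : ℂ} (hz : ‖z‖ < 1) (hw : ‖w‖ < 1) :
    ‖(w - z) / (1 - (starRingEnd ℂ) z * w)‖ < 1 := by
  have hd := green_den_ne' hz hw
  rw [norm_div, div_lt_one (norm_pos_iff.mpr hd)]
  have hz2 := green_sq_abs_lt hz
  have hw2 := green_sq_abs_lt hw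
  have h2 : Complex.normSq (w - z) < 1^2 * Complex.normSq (1 - (starRingEnd ℂ) z * w) := by
    simp only [Complex.normSq_apply, Complex.sub_re, Complex.sub_im, Complex.one_re,
      Complex.one_im, Complex.mul_re, Complex.mul_im, Complex.conj_re, Complex.conj_im,
      one_pow, one_mul]
    nlinarith [mul_pos (by linarith : (0:ℝ) < 1 - (z.re^2+z.im^2))
      (by linarith : (0:ℝ) < 1 - (w.re^2+w.im^2))]
  simpa using green_norm_lt_of_normSq zero_le_one h2

lemma green_normSq_lt_one {z : ℂ} (hz : ‖z‖ < 1) : Complex.normSq z < 1 := by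
  have := green_sq_abs_lt hz
  rwa [Complex.normSq_apply, ← sq, ← sq]

lemma green_one_sub_normSq_ne {z : ℂ} (hz : ‖z‖ < 1) :
    (1 : ℂ) - (Complex.normSq z : ℂ) ≠ 0 := by
  have h := green_normSq_lt_one hz
  intro hc
  have : ((1 - Complex.normSq z : ℝ) : ℂ) = 0 := by push_cast; linear_combination hc
  rw [Complex.ofReal_eq_zero] at this
  linarith

lemma green_gPhi_gPsi {z u : ℂ} (hz : ‖z‖ < 1) (hu : ‖u‖ < 1) :
    (gPsi z u - z) / (1 - (starRingEnd ℂ) z * gPsi z u) = u := by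
  have hd := green_den_ne hz hu
  have hnt := green_one_sub_normSq_ne hz
  have h2 : 1 - (starRingEnd ℂ) z * gPsi z u
      = (1 - (Complex.normSq z : ℂ)) / (1 + (starRingEnd ℂ) z * u) := by
    rw [gPsi, Complex.normSq_eq_conj_mul_self]
    field_simp
    ring
  rw [h2, div_eq_iff (div_ne_zero hnt hd), gPsi, Complex.normSq_eq_conj_mul_self]
  linear_combination z * inv_mul_cancel₀ hd

lemma green_gPsi_gPhi {z w : ℂ} (hz : ‖z‖ < 1) (hw : ‖w‖ < 1) :
    gPsi z ((w - z) / (1 - (starRingEnd ℂ) z * w)) = w := by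
  have hd := green_den_ne' hz hw
  have hnt := green_one_sub_normSq_ne hz
  have h2 : 1 + (starRingEnd ℂ) z * ((w - z) / (1 - (starRingEnd ℂ) z * w))
      = (1 - (Complex.normSq z : ℂ)) / (1 - (starRingEnd ℂ) z * w) := by
    rw [Complex.normSq_eq_conj_mul_self]
    field_simp
    ring
  rw [gPsi, h2, div_eq_iff (div_ne_zero hnt hd), Complex.normSq_eq_conj_mul_self]
  linear_combination (-z) * inv_mul_cancel₀ hd

lemma green_image {z : ℂ} (hz : ‖z‖ < 1) : gPsi z '' ball (0:ℂ) 1 = ball (0:ℂ) 1 := by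
  ext w
  simp only [Set.mem_image, mem_ball_zero_iff]
  constructor
  · rintro ⟨u, hu, rfl⟩
    exact green_gPsi_mem hz hu
  · intro hw
    exact ⟨(w - z) / (1 - (starRingEnd ℂ) z * w), green_gPhi_mem hz hw, green_gPsi_gPhi hz hw⟩

lemma green_injOn {z : ℂ} (hz : ‖z‖ < 1) : Set.InjOn (gPsi z) (ball (0:ℂ) 1) := by
  intro a ha b hb hab
  have ha' : ‖a‖ < 1 := mem_ball_zero_iff.mp ha
  have hb' : ‖b‖ < 1 := mem_ball_zero_iff.mp hb
  rw [← green_gPhi_gPsi hz ha', ← green_gPhi_gPsi hz hb', hab]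

lemma green_smallball {z : ℂ} (hz : ‖z‖ < 1) {ρ : ℝ} (hρ0 : 0 < ρ) (hρ1 : ρ ≤ 1) {u : ℂ}
    (hu : ‖u‖ < ρ) :
    gPsi z u ∈ ball ((((1-ρ^2)/(1-Complex.normSq z*ρ^2) : ℝ) : ℂ) * z)
      (ρ*(1-Complex.normSq z)/(1-Complex.normSq z*ρ^2)) := by
  set t := Complex.normSq z with ht
  have ht0 : 0 ≤ t := Complex.normSq_nonneg z
  have ht1 : t < 1 := green_normSq_lt_one hz
  have hρsq : ρ^2 ≤ 1 := by nlinarith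
  have htρ : 0 < 1 - t*ρ^2 := by nlinarith [mul_le_of_le_one_right ht0 hρsq]
  have hu1 : ‖u‖ < 1 := lt_of_lt_of_le hu hρ1
  have hd := green_den_ne hz hu1
  rw [mem_ball_iff_norm]
  have hcz : (t : ℂ) = (starRingEnd ℂ) z * z := by
    rw [ht]; exact Complex.normSq_eq_conj_mul_self
  have key : gPsi z u - (((1-ρ^2)/(1-t*ρ^2) : ℝ) : ℂ) * z
      = (((1-t)/(1-t*ρ^2) : ℝ) : ℂ) * ((u + ((ρ:ℂ))^2*z) / (1 + (starRingEnd ℂ) z * u)) := by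
    rw [gPsi]
    push_cast
    rw [hcz]
    have h2 : ((1:ℂ) - (starRingEnd ℂ) z * z * (ρ:ℂ)^2) ≠ 0 := by
      intro hc
      have : ((1 - t*ρ^2 : ℝ) : ℂ) = 0 := by push_cast; rw [hcz]; linear_combination hc
      rw [Complex.ofReal_eq_zero] at this; linarith
    linear_combination (-(u + z) * (1 + (starRingEnd ℂ) z * u)⁻¹) * inv_mul_cancel₀ h2
      + ((1 - (ρ:ℂ)^2) * z * (1 - (starRingEnd ℂ) z * z * (ρ:ℂ)^2)⁻¹) * inv_mul_cancel₀ hd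
  rw [key, norm_mul, Complex.norm_real, Real.norm_of_nonneg (div_nonneg (by linarith) htρ.le), norm_div]
  have hz2 := green_sq_abs_lt hz
  have hu2 : u.re^2 + u.im^2 < ρ^2 := by
    have h := Complex.sq_norm u
    rw [Complex.normSq_apply] at h
    nlinarith [norm_nonneg u, hu]
  have hnum : ‖u + ((ρ:ℂ))^2*z‖ < ρ * ‖1 + (starRingEnd ℂ) z * u‖ := by
    apply green_norm_lt_of_normSq hρ0.le
    rw [show ((ρ:ℂ))^2 = ((ρ^2 : ℝ) : ℂ) by push_cast; ring]
    have htre : t = z.re^2 + z.im^2 := by rw [ht, Complex.normSq_apply, sq, sq]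
    simp only [Complex.normSq_apply, Complex.add_re, Complex.add_im, Complex.one_re,
      Complex.one_im, Complex.mul_re, Complex.mul_im, Complex.conj_re, Complex.conj_im,
      Complex.ofReal_re, Complex.ofReal_im]
    rw [htre] at htρ
    nlinarith [mul_pos (by nlinarith : (0:ℝ) < ρ^2 - (u.re^2+u.im^2)) htρ,
      sq_nonneg ρ, sq_nonneg u.re, sq_nonneg u.im]
  have hpos : (0:ℝ) < ‖1 + (starRingEnd ℂ) z * u‖ := norm_pos_iff.mpr hd
  have hfrac : ‖u + ((ρ:ℂ))^2*z‖ / ‖1 + (starRingEnd ℂ) z * u‖ < ρ := by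
    rw [div_lt_iff₀ hpos]; exact hnum
  calc (1-t)/(1-t*ρ^2) * (‖u + ((ρ:ℂ))^2*z‖ / ‖1 + (starRingEnd ℂ) z * u‖)
      < (1-t)/(1-t*ρ^2) * ρ := mul_lt_mul_of_pos_left hfrac (div_pos (by linarith) htρ)
    _ = ρ*(1-t)/(1-t*ρ^2) := by ring

lemma green_vball {r : ℝ} (hr : 0 ≤ r) (a : ℂ) :
    volume (ball a r) = ENNReal.ofReal (π * r^2) := by
  rw [Complex.volume_ball, ENNReal.ofReal_mul Real.pi_pos.le, ENNReal.ofReal_pow hr,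
    ← NNReal.coe_real_pi, ENNReal.ofReal_coe_nnreal, mul_comm]

lemma green_normSq_gPsiD (z u : ℂ) :
    Complex.normSq (gPsiD z u)
      = (1 - Complex.normSq z)^2 / (Complex.normSq (1 + (starRingEnd ℂ) z * u))^2 := by
  rw [gPsiD, map_div₀, map_pow]
  congr 1
  rw [show (1 : ℂ) - (Complex.normSq z : ℂ) = ((1 - Complex.normSq z : ℝ) : ℂ) by push_cast; ring,
    Complex.normSq_ofReal, sq]

lemma green_den_meas (z : ℂ) : Measurable (fun u : ℂ => Complex.normSq (gPsiD z u)) := by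
  simp only [green_normSq_gPsiD]
  exact (measurable_const.div (((Complex.continuous_normSq.comp
    (continuous_const.add (continuous_const.mul continuous_id))).pow 2).measurable))

lemma green_g_meas : Measurable (fun u : ℂ => (Real.log ‖u‖)^2) :=
  (Real.measurable_log.comp continuous_norm.measurable).pow_const 2

lemma green_area {z : ℂ} (hz : ‖z‖ < 1) {ρ : ℝ} (hρ0 : 0 < ρ) (hρ1 : ρ ≤ 1) :
    ∫⁻ u in ball (0:ℂ) ρ, ENNReal.ofReal (Complex.normSq (gPsiD z u))
      ≤ ENNReal.ofReal (π * ρ^2) := by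
  set t := Complex.normSq z with ht
  have ht0 : 0 ≤ t := Complex.normSq_nonneg z
  have ht1 : t < 1 := green_normSq_lt_one hz
  have hρsq : ρ^2 ≤ 1 := by nlinarith
  have htρ : 0 < 1 - t*ρ^2 := by nlinarith [mul_le_of_le_one_right ht0 hρsq]
  have hsub : ball (0:ℂ) ρ ⊆ ball 0 1 := ball_subset_ball hρ1
  have hder : ∀ u ∈ ball (0:ℂ) ρ, HasFDerivWithinAt (gPsi z)
      (((1 : ℂ →L[ℂ] ℂ).smulRight (gPsiD z u)).restrictScalars ℝ) (ball (0:ℂ) ρ) u := by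
    intro u hu
    exact ((green_hasDeriv hz (mem_ball_zero_iff.mp (hsub hu))).hasFDerivAt.restrictScalars
      ℝ).hasFDerivWithinAt
  have hinj : Set.InjOn (gPsi z) (ball (0:ℂ) ρ) := (green_injOn hz).mono hsub
  have hR : 0 ≤ ρ*(1-t)/(1-t*ρ^2) := div_nonneg (by nlinarith) htρ.le
  calc ∫⁻ u in ball (0:ℂ) ρ, ENNReal.ofReal (Complex.normSq (gPsiD z u))
      = ∫⁻ u in ball (0:ℂ) ρ, ENNReal.ofReal
          |(((1 : ℂ →L[ℂ] ℂ).smulRight (gPsiD z u)).restrictScalars ℝ).det| := by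
        congr 1
        ext u
        rw [green_det, _root_.abs_of_nonneg (Complex.normSq_nonneg (gPsiD z u))]
    _ ≤ volume (gPsi z '' ball (0:ℂ) ρ) :=
        lintegral_abs_det_fderiv_le_addHaar_image volume measurableSet_ball hder hinj
    _ ≤ volume (ball ((((1-ρ^2)/(1-t*ρ^2) : ℝ) : ℂ) * z) (ρ*(1-t)/(1-t*ρ^2))) := by
        apply measure_mono
        rintro w ⟨u, hu, rfl⟩
        exact green_smallball hz hρ0 hρ1 (mem_ball_zero_iff.mp hu)
    _ = ENNReal.ofReal (π * (ρ*(1-t)/(1-t*ρ^2))^2) := green_vball hR _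
    _ ≤ ENNReal.ofReal (π * ρ^2) := by
        apply ENNReal.ofReal_le_ofReal
        apply mul_le_mul_of_nonneg_left _ Real.pi_pos.le
        have hle : ρ*(1-t)/(1-t*ρ^2) ≤ ρ := by
          rw [div_le_iff₀ htρ]
          nlinarith [mul_le_of_le_one_right ht0 hρsq]
        nlinarith

lemma green_superlevel_subset {s : ℝ} (hs : 0 < s) :
    {a : ℂ | s < (Real.log ‖a‖)^2} ∩ ball (0:ℂ) 1
      ⊆ ball (0:ℂ) (Real.exp (-Real.sqrt s)) := by
  rintro a ⟨ha1, ha2⟩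
  simp only [Set.mem_setOf_eq] at ha1
  rw [mem_ball_zero_iff] at ha2 ⊢
  rcases eq_or_ne a 0 with rfl | h0
  · simp only [norm_zero, Real.log_zero] at ha1
    nlinarith
  · have hpos : 0 < ‖a‖ := norm_pos_iff.mpr h0
    have hlt1 : ‖a‖ < 1 := by exact ha2
    have hlog : Real.log ‖a‖ < 0 := Real.log_neg hpos hlt1
    have h2 : Real.sqrt s < -Real.log ‖a‖ := by
      have h3 := Real.sqrt_lt_sqrt hs.le ha1
      rwa [Real.sqrt_sq_eq_abs, abs_of_neg hlog] at h3
    rw [← Real.exp_log hpos]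
    exact Real.exp_lt_exp.mpr (by linarith)

lemma green_superlevel_supset {s : ℝ} (hs : 0 < s) :
    ball (0:ℂ) (Real.exp (-Real.sqrt s)) \ {0}
      ⊆ {a : ℂ | s < (Real.log ‖a‖)^2} ∩ ball (0:ℂ) 1 := by
  rintro a ⟨ha, h0⟩
  have h0 : a ≠ 0 := fun h => h0 (by simp [h])
  rw [mem_ball_zero_iff] at ha
  have hpos : 0 < ‖a‖ := norm_pos_iff.mpr h0
  have hρ1 : Real.exp (-Real.sqrt s) ≤ 1 :=
    Real.exp_le_one_iff.mpr (neg_nonpos.mpr (Real.sqrt_nonneg s))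
  constructor
  · have hlog : Real.log ‖a‖ < -Real.sqrt s := by
      have := Real.log_lt_log hpos ha
      rwa [Real.log_exp] at this
    have hsq := Real.sq_sqrt hs.le
    simp only [Set.mem_setOf_eq]
    nlinarith [Real.sqrt_nonneg s]
  · rw [mem_ball_zero_iff]
    linarith

lemma green_compare {z : ℂ} (hz : ‖z‖ < 1) :
    ∫⁻ u in ball (0:ℂ) 1,
        ENNReal.ofReal (Complex.normSq (gPsiD z u) * (Real.log ‖u‖)^2)
      ≤ ∫⁻ u in ball (0:ℂ) 1, ENNReal.ofReal ((Real.log ‖u‖)^2) := by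
  set μ := volume.restrict (ball (0:ℂ) 1) with hμ
  set H : ℂ → ENNReal := fun u => ENNReal.ofReal (Complex.normSq (gPsiD z u)) with hH
  have mH : Measurable H := ENNReal.measurable_ofReal.comp (green_den_meas z)
  have mG : Measurable fun u : ℂ => ENNReal.ofReal ((Real.log ‖u‖)^2) :=
    ENNReal.measurable_ofReal.comp green_g_meas
  have step1 : ∫⁻ u in ball (0:ℂ) 1,
      ENNReal.ofReal (Complex.normSq (gPsiD z u) * (Real.log ‖u‖)^2)
      = ∫⁻ u, ENNReal.ofReal ((Real.log ‖u‖)^2) ∂(μ.withDensity H) := by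
    rw [lintegral_withDensity_eq_lintegral_mul μ mH mG]
    congr 1
    ext u
    simp only [Pi.mul_apply, hH]
    rw [ENNReal.ofReal_mul (Complex.normSq_nonneg _)]
  rw [step1,
    lintegral_eq_lintegral_meas_lt (μ.withDensity H) (ae_of_all _ fun x => sq_nonneg _)
      green_g_meas.aemeasurable,
    lintegral_eq_lintegral_meas_lt μ (ae_of_all _ fun x => sq_nonneg _)
      green_g_meas.aemeasurable]
  apply lintegral_mono_ae
  rw [ae_restrict_iff' measurableSet_Ioi]
  apply ae_of_all
  intro s hs
  rw [Set.mem_Ioi] at hs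
  set ρ := Real.exp (-Real.sqrt s) with hρ
  have hρ0 : 0 < ρ := Real.exp_pos _
  have hρ1 : ρ ≤ 1 := Real.exp_le_one_iff.mpr (neg_nonpos.mpr (Real.sqrt_nonneg s))
  have hSmeas : MeasurableSet {a : ℂ | s < (Real.log ‖a‖)^2} :=
    measurableSet_lt measurable_const green_g_meas
  have hL : (μ.withDensity H) {a | s < (Real.log ‖a‖)^2}
      ≤ ENNReal.ofReal (π * ρ^2) := by
    rw [withDensity_apply _ hSmeas, hμ, Measure.restrict_restrict hSmeas]
    calc ∫⁻ u in {a | s < (Real.log ‖a‖)^2} ∩ ball (0:ℂ) 1, H u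
        ≤ ∫⁻ u in ball (0:ℂ) ρ, H u := lintegral_mono_set (green_superlevel_subset hs)
      _ ≤ ENNReal.ofReal (π * ρ^2) := green_area hz hρ0 hρ1
  have hRb : ENNReal.ofReal (π * ρ^2) ≤ μ {a | s < (Real.log ‖a‖)^2} := by
    rw [hμ, Measure.restrict_apply hSmeas]
    calc ENNReal.ofReal (π * ρ^2) = volume (ball (0:ℂ) ρ) := (green_vball hρ0.le 0).symm
      _ = volume (ball (0:ℂ) ρ \ {0}) := (measure_diff_null (measure_singleton 0)).symm
      _ ≤ volume ({a : ℂ | s < (Real.log ‖a‖)^2} ∩ ball (0:ℂ) 1) :=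
          measure_mono (green_superlevel_supset hs)
  exact hL.trans hRb

lemma green_integrable_aux :
    IntegrableOn (fun s : ℝ => π * Real.exp (-Real.sqrt s)^2) (Set.Ioi (0:ℝ)) := by
  have hcont : Continuous fun s : ℝ => π * Real.exp (-Real.sqrt s)^2 :=
    continuous_const.mul ((Real.continuous_exp.comp Real.continuous_sqrt.neg).pow 2)
  rw [← Set.Ioc_union_Ioi_eq_Ioi (zero_le_one : (0:ℝ) ≤ 1)]
  apply IntegrableOn.union
  · exact hcont.integrableOn_Ioc
  · have base : IntegrableOn (fun s : ℝ => (16*π) * s ^ (-2:ℝ)) (Set.Ioi (1:ℝ)) :=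
      (integrableOn_Ioi_rpow_of_lt (by norm_num) zero_lt_one).const_mul _
    apply base.integrable.mono hcont.aestronglyMeasurable
    rw [ae_restrict_iff' measurableSet_Ioi]
    apply ae_of_all
    intro s hs
    rw [Set.mem_Ioi] at hs
    have hs0 : (0:ℝ) < s := lt_trans zero_lt_one hs
    set y := Real.sqrt s with hy
    have hy0 : 0 ≤ y := Real.sqrt_nonneg s
    have hsy : s = y^2 := (Real.sq_sqrt hs0.le).symm
    have hexp : Real.exp (y/2)^2 = Real.exp y := by
      rw [← Real.exp_nat_mul]; congr 1; push_cast; ring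
    have h1 : y/2 + 1 ≤ Real.exp (y/2) := Real.add_one_le_exp _
    have hE : y^2/4 ≤ Real.exp y := by
      rw [← hexp]; nlinarith
    have hkey : Real.exp (-y)^2 ≤ 16 * s ^ (-2:ℝ) := by
      have hEpos : 0 < Real.exp y := Real.exp_pos y
      have h2 : s^2 ≤ 16 * Real.exp y ^ 2 := by
        nlinarith [pow_le_pow_left₀ (by positivity : (0:ℝ) ≤ y^2/4) hE 2]
      rw [show (-2:ℝ) = -((2:ℕ):ℝ) by norm_num, Real.rpow_neg hs0.le, Real.rpow_natCast,
        Real.exp_neg, ← one_div, div_pow, one_pow,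
        show (16:ℝ) * (s^2)⁻¹ = 16/s^2 by field_simp,
        div_le_div_iff₀ (by positivity) (by positivity)]
      linarith
    rw [Real.norm_of_nonneg (by positivity), Real.norm_of_nonneg (by positivity)]
    calc π * Real.exp (-y)^2 ≤ π * (16 * s ^ (-2:ℝ)) :=
        mul_le_mul_of_nonneg_left hkey Real.pi_pos.le
      _ = 16*π * s ^ (-2:ℝ) := by ring

lemma green_finite :
    ∫⁻ u in ball (0:ℂ) 1, ENNReal.ofReal ((Real.log ‖u‖)^2) < ⊤ := by
  rw [lintegral_eq_lintegral_meas_lt _ (ae_of_all _ fun x => sq_nonneg _)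
    green_g_meas.aemeasurable]
  have hSmeas : ∀ s : ℝ, MeasurableSet {a : ℂ | s < (Real.log ‖a‖)^2} :=
    fun s => measurableSet_lt measurable_const green_g_meas
  calc ∫⁻ s in Set.Ioi (0:ℝ),
        (volume.restrict (ball (0:ℂ) 1)) {a | s < (Real.log ‖a‖)^2}
      ≤ ∫⁻ s in Set.Ioi (0:ℝ), ENNReal.ofReal (π * Real.exp (-Real.sqrt s)^2) := by
        apply lintegral_mono_ae
        rw [ae_restrict_iff' measurableSet_Ioi]
        apply ae_of_all
        intro s hs
        rw [Set.mem_Ioi] at hs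
        rw [Measure.restrict_apply (hSmeas s)]
        calc volume ({a : ℂ | s < (Real.log ‖a‖)^2} ∩ ball (0:ℂ) 1)
            ≤ volume (ball (0:ℂ) (Real.exp (-Real.sqrt s))) :=
              measure_mono (green_superlevel_subset hs)
          _ = ENNReal.ofReal (π * Real.exp (-Real.sqrt s)^2) :=
              green_vball (Real.exp_pos _).le 0
    _ < ⊤ := green_integrable_aux.setLIntegral_lt_top

/-- For every z in the unit disk, the L² norm of the Green function with pole at z
is at most that of the Green function with pole at 0. -/
theorem green_fn_L2_max_at_zero (z : ℂ) (hz : z ∈ ball (0 : ℂ) 1) :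
    ∫ w in ball (0 : ℂ) 1, (Real.log ‖(w - z) / (1 - (starRingEnd ℂ) z * w)‖) ^ 2
      ≤ ∫ w in ball (0 : ℂ) 1, (Real.log ‖w‖) ^ 2 := by
  have hz' : ‖z‖ < 1 := mem_ball_zero_iff.mp hz
  have hder : ∀ u ∈ ball (0:ℂ) 1, HasFDerivWithinAt (gPsi z)
      (((1 : ℂ →L[ℂ] ℂ).smulRight (gPsiD z u)).restrictScalars ℝ) (ball (0:ℂ) 1) u :=
    fun u hu => ((green_hasDeriv hz' (mem_ball_zero_iff.mp hu)).hasFDerivAt.restrictScalars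
      ℝ).hasFDerivWithinAt
  have key := integral_image_eq_integral_abs_det_fderiv_smul volume measurableSet_ball hder
    (green_injOn hz')
    (fun w => (Real.log ‖(w - z) / (1 - (starRingEnd ℂ) z * w)‖)^2)
  rw [green_image hz'] at key
  rw [key]
  have congr1 : ∫ u in ball (0:ℂ) 1,
      |(((1 : ℂ →L[ℂ] ℂ).smulRight (gPsiD z u)).restrictScalars ℝ).det| •
        (Real.log ‖(gPsi z u - z) / (1 - (starRingEnd ℂ) z * gPsi z u)‖)^2
      = ∫ u in ball (0:ℂ) 1,
          Complex.normSq (gPsiD z u) * (Real.log ‖u‖)^2 := by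
    apply setIntegral_congr_fun measurableSet_ball
    intro u hu
    have hu' : ‖u‖ < 1 := mem_ball_zero_iff.mp hu
    simp only [green_det, smul_eq_mul, green_gPhi_gPsi hz' hu',
      _root_.abs_of_nonneg (Complex.normSq_nonneg (gPsiD z u))]
  rw [congr1]
  have e1 : ∫ u in ball (0:ℂ) 1, Complex.normSq (gPsiD z u) * (Real.log ‖u‖)^2
      = (∫⁻ u in ball (0:ℂ) 1, ENNReal.ofReal
          (Complex.normSq (gPsiD z u) * (Real.log ‖u‖)^2)).toReal :=
    integral_eq_lintegral_of_nonneg_ae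
      (ae_of_all _ fun u => mul_nonneg (Complex.normSq_nonneg _) (sq_nonneg _))
      ((green_den_meas z).mul green_g_meas).aestronglyMeasurable
  have e2 : ∫ u in ball (0:ℂ) 1, (Real.log ‖u‖)^2
      = (∫⁻ u in ball (0:ℂ) 1, ENNReal.ofReal ((Real.log ‖u‖)^2)).toReal :=
    integral_eq_lintegral_of_nonneg_ae (ae_of_all _ fun u => sq_nonneg _)
      green_g_meas.aestronglyMeasurable
  rw [e1, e2]
  exact ENNReal.toReal_mono green_finite.ne (green_compare hz')
end

section
/- For the disk D_R of radius R centered at p ∈ ℂ, ∬_{D_R × D_R} |g(ξ,τ)|² dA(ξ) dA(τ) ≤ R⁴/4, where g is the Green function of the Laplacian on D_R. -/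
open MeasureTheory Metric Real Set

lemma contOn_mul_sq_log (A : ℝ) :
    ContinuousOn (fun r : ℝ => r * (A - Real.log r) ^ 2) (Ici 0) := by
  have hc : Continuous fun r : ℝ =>
      (Real.sqrt r * A - 2 * (Real.sqrt r * Real.log (Real.sqrt r))) ^ 2 :=
    ((continuous_sqrt.mul continuous_const).sub
      (continuous_const.mul (continuous_mul_log.comp continuous_sqrt))).pow 2
  refine hc.continuousOn.congr fun r hr => ?_
  have hr0 : (0:ℝ) ≤ r := hr
  have h1 : Real.log (Real.sqrt r) = Real.log r / 2 := Real.log_sqrt hr0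
  have h2 : Real.sqrt r ^ 2 = r := Real.sq_sqrt hr0
  calc r * (A - Real.log r) ^ 2
      = Real.sqrt r ^ 2 * (A - Real.log r) ^ 2 := by rw [h2]
    _ = (Real.sqrt r * A - 2 * (Real.sqrt r * (Real.log r / 2))) ^ 2 := by ring
    _ = (Real.sqrt r * A - 2 * (Real.sqrt r * Real.log (Real.sqrt r))) ^ 2 := by rw [h1]

lemma ftc_q {c : ℝ} (hc : 0 < c) :
    ∫ r in Ioc (0:ℝ) c, r * (Real.log c - Real.log r) ^ 2 = c ^ 2 / 4 := by
  set H : ℝ → ℝ := fun r =>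
    (r * Real.log c - r * Real.log r) ^ 2 / 2 + r * (r * Real.log c - r * Real.log r) / 2
      + r ^ 2 / 4 with hH
  have hHcont : Continuous H := by
    have h1 : Continuous fun r : ℝ => r * Real.log c - r * Real.log r :=
      (continuous_id.mul continuous_const).sub continuous_mul_log
    exact ((h1.pow 2).div_const 2).add ((continuous_id.mul h1).div_const 2) |>.add
      ((continuous_pow 2).div_const 4)
  have hint : IntervalIntegrable (fun r => r * (Real.log c - Real.log r) ^ 2) volume 0 c := by
    apply ContinuousOn.intervalIntegrable
    rw [uIcc_of_le hc.le]
    exact (contOn_mul_sq_log (Real.log c)).mono (Icc_subset_Ici_self)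
  have hderiv : ∀ x ∈ Ioo (0:ℝ) c, HasDerivWithinAt H
      (x * (Real.log c - Real.log x) ^ 2) (Ioi x) x := by
    intro x hx
    have hx0 : x ≠ 0 := ne_of_gt hx.1
    have hu : HasDerivAt (fun r : ℝ => r * Real.log c - r * Real.log r)
        (Real.log c - (Real.log x + 1)) x := by
      exact (((hasDerivAt_id' x).mul_const (Real.log c)).sub (Real.hasDerivAt_mul_log hx0)).congr_deriv (by ring)
    have hd : HasDerivAt H
        (2 * (x * Real.log c - x * Real.log x) ^ 1 * (Real.log c - (Real.log x + 1)) / 2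
          + (1 * (x * Real.log c - x * Real.log x)
            + x * (Real.log c - (Real.log x + 1))) / 2
          + (2 : ℕ) * x ^ 1 / 4) x := by
      exact (((hu.pow 2).div_const 2).add
        (((hasDerivAt_id x).mul hu).div_const 2)).add ((hasDerivAt_pow 2 x).div_const 4)
    have heq : 2 * (x * Real.log c - x * Real.log x) ^ 1 * (Real.log c - (Real.log x + 1)) / 2
          + (1 * (x * Real.log c - x * Real.log x) + x * (Real.log c - (Real.log x + 1))) / 2
          + (2:ℕ) * x ^ 1 / 4 = x * (Real.log c - Real.log x) ^ 2 := by
      push_cast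
      ring
    rw [heq] at hd
    exact hd.hasDerivWithinAt
  have := intervalIntegral.integral_eq_sub_of_hasDeriv_right_of_le hc.le
    hHcont.continuousOn hderiv hint
  rw [← intervalIntegral.integral_of_le hc.le, this, hH]
  simp [Real.log_zero]

lemma oneDim {s : ℝ} (hs : 0 < s) :
    IntegrableOn (fun r : ℝ => r * (Real.log (1 + s / r ^ 2)) ^ 2) (Ioi 0) ∧
      ∫ r in Ioi (0:ℝ), r * (Real.log (1 + s / r ^ 2)) ^ 2 ≤ 3 * s := by
  set c := Real.sqrt s with hcdef
  have hc0 : 0 < c := Real.sqrt_pos.2 hs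
  have hcs : c ^ 2 = s := Real.sq_sqrt hs.le
  set M : ℝ → ℝ := fun r => r * (Real.log (1 + s / r ^ 2)) ^ 2 with hM
  have hMmeas : Measurable M := by
    apply measurable_id.mul
    exact ((Real.measurable_log.comp
      (measurable_const.add (measurable_const.div (measurable_id.pow_const 2)))).pow_const 2)
  set g1 : ℝ → ℝ := fun r =>
    2 * (Real.log 2) ^ 2 * r + 8 * (r * (Real.log c - Real.log r) ^ 2) with hg1
  have hg1cont : ContinuousOn g1 (Icc (0:ℝ) c) := by
    apply ContinuousOn.add
    · exact (continuous_const.mul continuous_id).continuousOn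
    · exact (continuousOn_const.mul
        ((contOn_mul_sq_log (Real.log c)).mono Icc_subset_Ici_self))
  have hg1int : IntegrableOn g1 (Ioc 0 c) :=
    (hg1cont.integrableOn_Icc).mono_set Ioc_subset_Icc_self
  have hbound1 : ∀ r ∈ Ioc (0:ℝ) c, M r ≤ g1 r := by
    intro r hr
    have hr0 : 0 < r := hr.1
    have hr2 : r ^ 2 ≤ s := by
      calc r ^ 2 ≤ c ^ 2 := by gcongr; exact hr.2
      _ = s := hcs
    have hx1 : (1:ℝ) ≤ s / r ^ 2 := (one_le_div (by positivity)).2 hr2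
    have hlog0 : 0 ≤ Real.log (1 + s / r ^ 2) := Real.log_nonneg (by linarith)
    have hlogle : Real.log (1 + s / r ^ 2) ≤ Real.log 2 + 2 * (Real.log c - Real.log r) := by
      have h1 : Real.log (1 + s / r ^ 2) ≤ Real.log (2 * (s / r ^ 2)) := by
        apply Real.log_le_log (by positivity)
        linarith
      have h2 : Real.log (2 * (s / r ^ 2)) = Real.log 2 + (Real.log s - Real.log (r ^ 2)) := by
        rw [Real.log_mul (by norm_num) (by positivity),
          Real.log_div (by positivity) (by positivity)]
      have h3 : Real.log s = 2 * Real.log c := by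
        rw [← hcs, Real.log_pow]; norm_num
      have h4 : Real.log (r ^ 2) = 2 * Real.log r := by
        rw [Real.log_pow]; norm_num
      rw [h2, h3, h4] at h1
      linarith
    have hsq : (Real.log (1 + s / r ^ 2)) ^ 2
        ≤ 2 * (Real.log 2) ^ 2 + 8 * (Real.log c - Real.log r) ^ 2 := by
      have h5 : (Real.log (1 + s / r ^ 2)) ^ 2
          ≤ (Real.log 2 + 2 * (Real.log c - Real.log r)) ^ 2 :=
        pow_le_pow_left₀ hlog0 hlogle 2
      nlinarith [sq_nonneg (Real.log 2 - 2 * (Real.log c - Real.log r))]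
    calc M r = r * (Real.log (1 + s / r ^ 2)) ^ 2 := rfl
      _ ≤ r * (2 * (Real.log 2) ^ 2 + 8 * (Real.log c - Real.log r) ^ 2) := by
          apply mul_le_mul_of_nonneg_left hsq hr0.le
      _ = g1 r := by simp only [hg1]; ring
  have hMnorm : ∀ r ∈ Ioc (0:ℝ) c, ‖M r‖ ≤ g1 r := by
    intro r hr
    rw [Real.norm_eq_abs, abs_of_nonneg (mul_nonneg hr.1.le (sq_nonneg _))]
    exact hbound1 r hr
  have hM1 : IntegrableOn M (Ioc 0 c) := by
    apply Integrable.mono' hg1int (hMmeas.aestronglyMeasurable.restrict)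
    exact ae_restrict_of_forall_mem measurableSet_Ioc hMnorm
  have hI1 : ∫ r in Ioc (0:ℝ) c, M r ≤ (Real.log 2) ^ 2 * s + 2 * s := by
    have h6 : ∫ r in Ioc (0:ℝ) c, M r ≤ ∫ r in Ioc (0:ℝ) c, g1 r :=
      setIntegral_mono_on hM1 hg1int measurableSet_Ioc hbound1
    have h7 : ∫ r in Ioc (0:ℝ) c, g1 r
        = 2 * (Real.log 2) ^ 2 * (c ^ 2 / 2) + 8 * (c ^ 2 / 4) := by
      have ha : IntegrableOn (fun r : ℝ => 2 * (Real.log 2) ^ 2 * r) (Ioc 0 c) :=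
        (continuous_const.mul continuous_id).integrableOn_Icc.mono_set Ioc_subset_Icc_self
      have hb : IntegrableOn (fun r : ℝ => 8 * (r * (Real.log c - Real.log r) ^ 2)) (Ioc 0 c) :=
        (continuousOn_const.mul ((contOn_mul_sq_log (Real.log c)).mono
          Icc_subset_Ici_self)).integrableOn_Icc.mono_set Ioc_subset_Icc_self
      rw [hg1]
      rw [integral_add ha hb, integral_const_mul, integral_const_mul, ftc_q hc0]
      congr 1
      · rw [← intervalIntegral.integral_of_le hc0.le]
        simp [integral_id]
    rw [h7, hcs] at h6
    linarith
  have hbound2 : ∀ r ∈ Ioi c, M r ≤ s ^ 2 * r ^ (-3:ℝ) := by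
    intro r hr
    have hrc : c < r := hr
    have hr0 : 0 < r := lt_trans hc0 hrc
    have hx0 : 0 < s / r ^ 2 := by positivity
    have hlog0 : 0 ≤ Real.log (1 + s / r ^ 2) := Real.log_nonneg (by linarith)
    have hlogle : Real.log (1 + s / r ^ 2) ≤ s / r ^ 2 := by
      have := Real.log_le_sub_one_of_pos (show (0:ℝ) < 1 + s / r ^ 2 by linarith)
      linarith
    have hsq : (Real.log (1 + s / r ^ 2)) ^ 2 ≤ (s / r ^ 2) ^ 2 :=
      pow_le_pow_left₀ hlog0 hlogle 2
    have hrw : s ^ 2 * r ^ (-3:ℝ) = r * (s / r ^ 2) ^ 2 := by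
      rw [show (-3:ℝ) = -(3:ℕ) by norm_num, Real.rpow_neg hr0.le, Real.rpow_natCast]
      field_simp
    rw [hrw]
    exact mul_le_mul_of_nonneg_left hsq hr0.le
  have htint : IntegrableOn (fun r : ℝ => s ^ 2 * r ^ (-3:ℝ)) (Ioi c) :=
    (integrableOn_Ioi_rpow_of_lt (by norm_num) hc0).const_mul _
  have hM2 : IntegrableOn M (Ioi c) := by
    apply Integrable.mono' htint (hMmeas.aestronglyMeasurable.restrict)
    apply ae_restrict_of_forall_mem measurableSet_Ioi
    intro r hr
    rw [Real.norm_eq_abs, abs_of_nonneg]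
    · exact hbound2 r hr
    · have hr0 : 0 < r := lt_trans hc0 hr
      positivity
  have hI2 : ∫ r in Ioi c, M r ≤ s / 2 := by
    have h6 : ∫ r in Ioi c, M r ≤ ∫ r in Ioi c, s ^ 2 * r ^ (-3:ℝ) := by
      apply setIntegral_mono_on hM2 htint measurableSet_Ioi hbound2
    have h7 : ∫ r in Ioi c, s ^ 2 * r ^ (-3:ℝ) = s ^ 2 * (c ^ (-2:ℝ) / 2) := by
      rw [integral_const_mul, integral_Ioi_rpow_of_lt (by norm_num) hc0]
      norm_num
    have h8 : s ^ 2 * (c ^ (-2:ℝ) / 2) = s / 2 := by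
      rw [show (-2:ℝ) = -(2:ℕ) by norm_num, Real.rpow_neg hc0.le, Real.rpow_natCast, hcs]
      field_simp
    rw [h7, h8] at h6
    exact h6
  have hunion : Ioc (0:ℝ) c ∪ Ioi c = Ioi 0 := Ioc_union_Ioi_eq_Ioi hc0.le
  have hMint : IntegrableOn M (Ioi 0) := by
    rw [← hunion]
    exact hM1.union hM2
  refine ⟨hMint, ?_⟩
  have hsplit : ∫ r in Ioi (0:ℝ), M r = (∫ r in Ioc (0:ℝ) c, M r) + ∫ r in Ioi c, M r := by
    rw [← hunion]
    exact setIntegral_union (Ioc_disjoint_Ioi le_rfl) measurableSet_Ioi hM1 hM2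
  have hlog2 : (Real.log 2) ^ 2 ≤ 1 / 2 := by
    have h9 : Real.log 2 < 0.6931471808 := Real.log_two_lt_d9
    have h10 : 0 ≤ Real.log 2 := Real.log_nonneg (by norm_num)
    nlinarith
  rw [hsplit]
  nlinarith [hI1, hI2]

lemma volume_ball_one_toReal : (volume (ball (0:ℂ) 1)).toReal = Real.pi := by
  rw [Complex.volume_ball]
  simp [ENNReal.toReal_mul]

lemma radial_integral (f : ℝ → ℝ) :
    ∫ z : ℂ, f (‖z‖) = 2 * Real.pi * ∫ r in Ioi (0:ℝ), r * f r := by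
  have h := integral_fun_norm_addHaar (volume : Measure ℂ) f
  simp only [Complex.finrank_real_complex, measureReal_def, volume_ball_one_toReal,
    smul_eq_mul, nsmul_eq_mul, Nat.cast_ofNat, pow_one] at h
  have h2 : (fun y : ℝ => y ^ (2-1) * f y) = fun r : ℝ => r * f r := by
    funext y; norm_num
  rw [h, h2]
  ring

lemma radial_integrable {f : ℝ → ℝ} (hmeas : Measurable f)
    (hf : IntegrableOn (fun r => r * f r) (Ioi (0:ℝ))) :
    Integrable (fun z : ℂ => f (‖z‖)) := by
  have e1 : MeasurableEmbedding (Subtype.val : Ioi (0:ℝ) → ℝ) :=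
    MeasurableEmbedding.subtype_coe measurableSet_Ioi
  have hmap1 : Measure.map Subtype.val (volume.comap (Subtype.val : Ioi (0:ℝ) → ℝ))
      = volume.restrict (Ioi 0) := by
    rw [e1.map_comap, Subtype.range_coe]
  have h1 : Integrable (fun r : Ioi (0:ℝ) => (r : ℝ) * f (r : ℝ))
      (volume.comap (Subtype.val : Ioi (0:ℝ) → ℝ)) := by
    exact (e1.integrable_map_iff (g := fun r : ℝ => r * f r)).1 (by rw [hmap1]; exact hf)
  have h2 : Integrable (fun r : Ioi (0:ℝ) => f (r : ℝ)) (Measure.volumeIoiPow 1) := by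
    rw [Measure.volumeIoiPow]
    rw [integrable_withDensity_iff_integrable_smul'
      (by exact (measurable_subtype_coe.pow_const 1).ennreal_ofReal)
      (ae_of_all _ fun r => ENNReal.ofReal_lt_top)]
    apply h1.congr
    apply ae_of_all
    intro r
    have hr0 : (0:ℝ) ≤ (r:ℝ) := (le_of_lt r.2)
    simp [ENNReal.toReal_ofReal hr0, smul_eq_mul]
  have h3 : Integrable (fun x : sphere (0:ℂ) 1 × Ioi (0:ℝ) => f (x.2 : ℝ))
      ((volume : Measure ℂ).toSphere.prod (Measure.volumeIoiPow 1)) := by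
    simpa using (integrable_const (1:ℝ)).smul_prod h2
  have hmp := (volume : Measure ℂ).measurePreserving_homeomorphUnitSphereProd
  rw [Complex.finrank_real_complex] at hmp
  have h4 : Integrable (fun x : ({(0:ℂ)}ᶜ : Set ℂ) => f ‖(x : ℂ)‖)
      (volume.comap (Subtype.val : ({(0:ℂ)}ᶜ : Set ℂ) → ℂ)) := by
    have := (hmp.integrable_comp_emb (Homeomorph.measurableEmbedding _)
      (g := fun x : sphere (0:ℂ) 1 × Ioi (0:ℝ) => f (x.2 : ℝ))).2 h3
    exact this.congr (ae_of_all _ fun x => by simp)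
  have e0 : MeasurableEmbedding (Subtype.val : ({(0:ℂ)}ᶜ : Set ℂ) → ℂ) :=
    MeasurableEmbedding.subtype_coe (measurableSet_singleton _).compl
  have hmap0 : Measure.map Subtype.val
      (volume.comap (Subtype.val : ({(0:ℂ)}ᶜ : Set ℂ) → ℂ)) = volume := by
    rw [e0.map_comap, Subtype.range_coe, MeasureTheory.restrict_compl_singleton]
  have h5 : Integrable (fun z : ℂ => f ‖z‖) volume := by
    rw [← hmap0, e0.integrable_map_iff]
    exact h4
  simpa using h5

lemma normSq_identity (R : ℝ) (a b : ℂ) :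
    Complex.normSq ((R:ℂ) ^ 2 - (starRingEnd ℂ) a * b)
      = R ^ 2 * Complex.normSq (b - a)
        + (R ^ 2 - Complex.normSq a) * (R ^ 2 - Complex.normSq b) := by
  simp only [Complex.normSq_apply, Complex.sub_re, Complex.sub_im, Complex.mul_re, Complex.mul_im,
    Complex.conj_re, Complex.conj_im, Complex.ofReal_re, Complex.ofReal_im, pow_two,
    Complex.mul_im]
  ring

lemma pointwise_bound (p : ℂ) (R : ℝ) (hR : 0 < R) (τ ξ : ℂ)
    (hτ : ‖τ - p‖ < R) (hξ : ‖ξ - p‖ < R) :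
    ((1 / (2 * π)) * Real.log (‖
        (R:ℂ) * (ξ - τ) / ((R:ℂ) ^ 2 - (starRingEnd ℂ) (τ - p) * (ξ - p))‖)) ^ 2
      ≤ (1 / (16 * π ^ 2)) * (Real.log (1 +
          (R ^ 2 - (‖τ - p‖) ^ 2) / (‖ξ - τ‖) ^ 2)) ^ 2 := by
  by_cases hne : ξ = τ
  · subst hne
    simp [Real.pi_ne_zero, sq_nonneg]
  · set a := τ - p with ha
    set b := ξ - p with hb
    have hba : b - a = ξ - τ := by rw [ha, hb]; ring
    set r := ‖ξ - τ‖ with hr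
    have hr0 : 0 < r := by
      rw [hr]
      exact norm_pos_iff.2 (sub_ne_zero.2 hne)
    set s : ℝ := R ^ 2 - (‖a‖) ^ 2 with hs
    set s' : ℝ := R ^ 2 - (‖b‖) ^ 2 with hs'
    have hs0 : 0 < s := by
      have := norm_nonneg a
      nlinarith
    have hs'0 : 0 < s' := by
      have := norm_nonneg b
      nlinarith
    have hs'R : s' ≤ R ^ 2 := by
      have := norm_nonneg b
      nlinarith [sq_nonneg (‖b‖)]
    set D : ℂ := (R:ℂ) ^ 2 - (starRingEnd ℂ) a * b with hD
    have hDsq : Complex.normSq D = R ^ 2 * r ^ 2 + s * s' := by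
      rw [hD, normSq_identity, hba]
      rw [← Complex.sq_norm (ξ - τ), ← Complex.sq_norm a, ← Complex.sq_norm b]
    have hD0 : Complex.normSq D ≠ 0 := by
      rw [hDsq]; positivity
    have hDne : D ≠ 0 := fun h => hD0 (by rw [h, map_zero])
    have habs : ‖(R:ℂ) * (ξ - τ) / D‖ = R * r / ‖D‖ := by
      rw [norm_div, norm_mul, Complex.norm_real, Real.norm_eq_abs, abs_of_pos hR]
    have hDabs : ‖D‖ ^ 2 = R ^ 2 * r ^ 2 + s * s' := by
      rw [Complex.sq_norm, hDsq]
    have hDa0 : 0 < ‖D‖ := norm_pos_iff.2 hDne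
    have hlog : Real.log (‖(R:ℂ) * (ξ - τ) / D‖)
        = -(1/2) * Real.log (1 + s * s' / (R ^ 2 * r ^ 2)) := by
      rw [habs]
      have h1 : Real.log (R * r / ‖D‖)
          = Real.log (R * r) - Real.log (‖D‖) := by
        rw [Real.log_div (by positivity) (by positivity)]
      have h2 : Real.log (R * r) = (1/2) * Real.log (R ^ 2 * r ^ 2) := by
        rw [show R ^ 2 * r ^ 2 = (R * r) ^ 2 by ring, Real.log_pow]
        ring
      have h3 : Real.log (‖D‖)
          = (1/2) * Real.log (R ^ 2 * r ^ 2 + s * s') := by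
        rw [← hDabs, Real.log_pow]
        push_cast
        ring
      have h4 : Real.log (R ^ 2 * r ^ 2 + s * s') - Real.log (R ^ 2 * r ^ 2)
          = Real.log (1 + s * s' / (R ^ 2 * r ^ 2)) := by
        rw [← Real.log_div (by positivity) (by positivity)]
        congr 1
        field_simp
      rw [h1, h2, h3]
      rw [show (1/2 : ℝ) * Real.log (R ^ 2 * r ^ 2) - 1/2 * Real.log (R ^ 2 * r ^ 2 + s * s')
        = -(1/2) * (Real.log (R ^ 2 * r ^ 2 + s * s') - Real.log (R ^ 2 * r ^ 2)) by ring, h4]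
    rw [hlog]
    have hXY : s * s' / (R ^ 2 * r ^ 2) ≤ s / r ^ 2 := by
      rw [div_le_div_iff₀ (by positivity) (by positivity)]
      have h5 : 0 ≤ s * r ^ 2 := by positivity
      nlinarith [mul_le_mul_of_nonneg_left hs'R h5]
    have hX0 : 0 ≤ s * s' / (R ^ 2 * r ^ 2) := by positivity
    have hlog1 : 0 ≤ Real.log (1 + s * s' / (R ^ 2 * r ^ 2)) := Real.log_nonneg (by linarith)
    have hlog2 : Real.log (1 + s * s' / (R ^ 2 * r ^ 2)) ≤ Real.log (1 + s / r ^ 2) := by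
      apply Real.log_le_log (by linarith)
      linarith
    have hsq : (Real.log (1 + s * s' / (R ^ 2 * r ^ 2))) ^ 2
        ≤ (Real.log (1 + s / r ^ 2)) ^ 2 := pow_le_pow_left₀ hlog1 hlog2 2
    have hexp : ∀ L : ℝ, ((1 / (2 * π)) * (-(1/2) * L)) ^ 2
        = (1 / (16 * π ^ 2)) * L ^ 2 := by
      intro L
      ring
    rw [hexp]
    apply mul_le_mul_of_nonneg_left _ (by positivity)
    exact hsq

lemma inner_bound (p : ℂ) (R : ℝ) (hR : 0 < R) (τ : ℂ) (hτR : ‖τ - p‖ < R) :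
    ∫ ξ in ball p R, ((1 / (2 * π)) * Real.log (‖
        (R:ℂ) * (ξ - τ) / ((R:ℂ) ^ 2 - (starRingEnd ℂ) (τ - p) * (ξ - p))‖)) ^ 2
      ≤ 3 / (8 * π) * (R ^ 2 - (‖τ - p‖) ^ 2) := by
  set s : ℝ := R ^ 2 - (‖τ - p‖) ^ 2 with hsdef
  have hs : 0 < s := by nlinarith [norm_nonneg (τ - p)]
  set f : ℝ → ℝ := fun r => (Real.log (1 + s / r ^ 2)) ^ 2 with hf
  have hfmeas : Measurable f := ((Real.measurable_log.comp
      (measurable_const.add (measurable_const.div (measurable_id.pow_const 2)))).pow_const 2)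
  have hone := oneDim hs
  have hint : Integrable (fun z : ℂ => f (‖z‖)) := radial_integrable hfmeas hone.1
  have hintτ : Integrable (fun ξ : ℂ => f (‖ξ - τ‖)) := hint.comp_sub_right τ
  have hπ : (0:ℝ) < π := Real.pi_pos
  have step1 : ∫ ξ in ball p R, ((1 / (2 * π)) * Real.log (‖
        (R:ℂ) * (ξ - τ) / ((R:ℂ) ^ 2 - (starRingEnd ℂ) (τ - p) * (ξ - p))‖)) ^ 2
      ≤ ∫ ξ in ball p R, (1 / (16 * π ^ 2)) * f (‖ξ - τ‖) := by
    apply integral_mono_of_nonneg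
    · exact ae_of_all _ fun ξ => sq_nonneg _
    · exact (hintτ.const_mul _).integrableOn
    · apply ae_restrict_of_forall_mem measurableSet_ball
      intro ξ hξ
      have hξR : ‖ξ - p‖ < R := by
        rw [← Complex.dist_eq]
        exact mem_ball.1 hξ
      exact pointwise_bound p R hR τ ξ hτR hξR
  have step2 : ∫ ξ in ball p R, (1 / (16 * π ^ 2)) * f (‖ξ - τ‖)
      ≤ ∫ ξ : ℂ, (1 / (16 * π ^ 2)) * f (‖ξ - τ‖) := by
    apply setIntegral_le_integral (hintτ.const_mul _)
    exact ae_of_all _ fun ξ => mul_nonneg (by positivity) (sq_nonneg _)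
  have step3 : ∫ ξ : ℂ, (1 / (16 * π ^ 2)) * f (‖ξ - τ‖)
      = (1 / (16 * π ^ 2)) * (2 * π * ∫ r in Ioi (0:ℝ), r * f r) := by
    rw [integral_const_mul]
    congr 1
    rw [← radial_integral f]
    exact integral_sub_right_eq_self (fun z : ℂ => f (‖z‖)) τ
  have step4 : (1 / (16 * π ^ 2)) * (2 * π * ∫ r in Ioi (0:ℝ), r * f r)
      ≤ 3 / (8 * π) * s := by
    have h1 : ∫ r in Ioi (0:ℝ), r * f r ≤ 3 * s := hone.2
    have h2 : (1 / (16 * π ^ 2)) * (2 * π * ∫ r in Ioi (0:ℝ), r * f r)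
        ≤ (1 / (16 * π ^ 2)) * (2 * π * (3 * s)) := by
      apply mul_le_mul_of_nonneg_left _ (by positivity)
      apply mul_le_mul_of_nonneg_left h1 (by positivity)
    have h3 : (1 / (16 * π ^ 2)) * (2 * π * (3 * s)) = 3 / (8 * π) * s := by
      field_simp
      ring
    linarith
  linarith [step1, step2, step3.le, step3.ge, step4]

/-- For the disk D_R of radius R centered at p, the double integral of the squared
Green function is at most R⁴/4. -/
theorem green_fn_double_integral_disk (p : ℂ) (R : ℝ) (hR : 0 < R) :
    ∫ τ in ball p R, ∫ ξ in ball p R,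
        ((1 / (2 * π)) * Real.log (‖
          (R * (ξ - τ) / (R ^ 2 - (starRingEnd ℂ) (τ - p) * (ξ - p)))‖)) ^ 2
      ≤ R ^ 4 / 4 := by
  have hπ : (0:ℝ) < π := Real.pi_pos
  -- outer dominating function
  have hcont : Continuous fun τ : ℂ => 3 / (8 * π) * (R ^ 2 - (‖τ - p‖) ^ 2) :=
    continuous_const.mul (continuous_const.sub
      ((continuous_norm.comp (continuous_id.sub continuous_const)).pow 2))
  have hdom : IntegrableOn (fun τ : ℂ => 3 / (8 * π) * (R ^ 2 - (‖τ - p‖) ^ 2))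
      (ball p R) :=
    (hcont.continuousOn.integrableOn_compact (isCompact_closedBall p R)).mono_set
      ball_subset_closedBall
  have step1 : ∫ τ in ball p R, ∫ ξ in ball p R,
        ((1 / (2 * π)) * Real.log (‖
          R * (ξ - τ) / (R ^ 2 - (starRingEnd ℂ) (τ - p) * (ξ - p))‖)) ^ 2
      ≤ ∫ τ in ball p R, 3 / (8 * π) * (R ^ 2 - (‖τ - p‖) ^ 2) := by
    apply integral_mono_of_nonneg
    · exact ae_of_all _ fun τ => integral_nonneg fun ξ => sq_nonneg _
    · exact hdom
    · apply ae_restrict_of_forall_mem measurableSet_ball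
      intro τ hτ
      have hτR : ‖τ - p‖ < R := by
        rw [← Complex.dist_eq]
        exact mem_ball.1 hτ
      exact inner_bound p R hR τ hτR
  -- the outer radial integral
  set f2 : ℝ → ℝ := fun r => max (R ^ 2 - r ^ 2) 0 with hf2
  have hf2meas : Measurable f2 :=
    (measurable_const.sub (measurable_id.pow_const 2)).max measurable_const
  have hf2cont : Continuous fun r : ℝ => r * f2 r :=
    continuous_id.mul ((continuous_const.sub (continuous_pow 2)).max continuous_const)
  have hf2zero : ∀ r ∈ Ioi R, r * f2 r = 0 := by
    intro r hr
    have hrR : R < r := hr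
    have : R ^ 2 - r ^ 2 ≤ 0 := by nlinarith
    simp [hf2, max_eq_right this]
  have hpart1 : IntegrableOn (fun r : ℝ => r * f2 r) (Ioc 0 R) :=
    hf2cont.integrableOn_Icc.mono_set Ioc_subset_Icc_self
  have hpart2 : IntegrableOn (fun r : ℝ => r * f2 r) (Ioi R) := by
    apply (integrableOn_zero (s := Ioi R)).congr_fun _ measurableSet_Ioi
    intro r hr
    exact (hf2zero r hr).symm
  have hf2int : IntegrableOn (fun r : ℝ => r * f2 r) (Ioi 0) := by
    rw [← Ioc_union_Ioi_eq_Ioi hR.le]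
    exact hpart1.union hpart2
  have hf2glob : Integrable (fun z : ℂ => f2 (‖z‖)) := radial_integrable hf2meas hf2int
  have hf2τ : Integrable (fun τ : ℂ => f2 (‖τ - p‖)) := hf2glob.comp_sub_right p
  have hival : ∫ r in Ioi (0:ℝ), r * f2 r = R ^ 4 / 4 := by
    rw [← Ioc_union_Ioi_eq_Ioi hR.le,
      setIntegral_union (Ioc_disjoint_Ioi le_rfl) measurableSet_Ioi hpart1 hpart2]
    have hz : ∫ r in Ioi R, r * f2 r = 0 := by
      rw [setIntegral_congr_fun measurableSet_Ioi hf2zero]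
      simp
    have hIoc : ∫ r in Ioc (0:ℝ) R, r * f2 r = R ^ 4 / 4 := by
      have heqon : EqOn (fun r : ℝ => r * f2 r) (fun r : ℝ => R ^ 2 * r - r ^ 3) (Ioc 0 R) := by
        intro r hr
        have h1 : 0 ≤ R ^ 2 - r ^ 2 := by nlinarith [hr.1.le, hr.2]
        simp only [hf2, max_eq_left h1]
        ring
      rw [setIntegral_congr_fun measurableSet_Ioc heqon,
        ← intervalIntegral.integral_of_le hR.le]
      have hd : ∀ x ∈ uIcc (0:ℝ) R, HasDerivAt (fun x : ℝ => R ^ 2 * x ^ 2 / 2 - x ^ 4 / 4)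
          (R ^ 2 * x - x ^ 3) x := by
        intro x _
        have h1 : HasDerivAt (fun x : ℝ => R ^ 2 * x ^ 2 / 2 - x ^ 4 / 4)
            ((R ^ 2 * ((2:ℕ) * x ^ 1)) / 2 - ((4:ℕ) * x ^ 3) / 4) x :=
          (((hasDerivAt_pow 2 x).const_mul (R ^ 2)).div_const 2).sub
            ((hasDerivAt_pow 4 x).div_const 4)
        convert h1 using 1
        push_cast
        ring
      rw [intervalIntegral.integral_eq_sub_of_hasDerivAt hd
        ((continuous_const.mul continuous_id |>.sub (continuous_pow 3)).intervalIntegrable 0 R)]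
      norm_num
      ring
    rw [hz, hIoc]
    ring
  have houter : ∫ τ in ball p R, (R ^ 2 - (‖τ - p‖) ^ 2) ≤ π * R ^ 4 / 2 := by
    have heq1 : ∫ τ in ball p R, (R ^ 2 - (‖τ - p‖) ^ 2)
        = ∫ τ in ball p R, f2 (‖τ - p‖) := by
      apply setIntegral_congr_fun measurableSet_ball
      intro τ hτ
      have hτR : ‖τ - p‖ < R := by
        rw [← Complex.dist_eq]
        exact mem_ball.1 hτ
      have h1 : 0 ≤ R ^ 2 - (‖τ - p‖) ^ 2 := by
        nlinarith [norm_nonneg (τ - p)]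
      simp [hf2, max_eq_left h1]
    have hle : ∫ τ in ball p R, f2 (‖τ - p‖) ≤ ∫ τ : ℂ, f2 (‖τ - p‖) :=
      setIntegral_le_integral hf2τ (ae_of_all _ fun τ => le_max_right _ _)
    have heval : ∫ τ : ℂ, f2 (‖τ - p‖) = 2 * π * (R ^ 4 / 4) := by
      rw [integral_sub_right_eq_self (fun z : ℂ => f2 (‖z‖)) p, radial_integral, hival]
    rw [heq1]
    rw [heval] at hle
    linarith
  have hconst : ∫ τ in ball p R, 3 / (8 * π) * (R ^ 2 - (‖τ - p‖) ^ 2)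
      = 3 / (8 * π) * ∫ τ in ball p R, (R ^ 2 - (‖τ - p‖) ^ 2) :=
    integral_const_mul _ _
  have hfinal : 3 / (8 * π) * (π * R ^ 4 / 2) ≤ R ^ 4 / 4 := by
    have h1 : 3 / (8 * π) * (π * R ^ 4 / 2) = 3 * R ^ 4 / 16 := by
      field_simp
      ring
    rw [h1]
    nlinarith [pow_pos hR 4]
  calc ∫ τ in ball p R, ∫ ξ in ball p R,
        ((1 / (2 * π)) * Real.log (‖
          R * (ξ - τ) / (R ^ 2 - (starRingEnd ℂ) (τ - p) * (ξ - p))‖)) ^ 2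
      ≤ ∫ τ in ball p R, 3 / (8 * π) * (R ^ 2 - (‖τ - p‖) ^ 2) := step1
    _ = 3 / (8 * π) * ∫ τ in ball p R, (R ^ 2 - (‖τ - p‖) ^ 2) := hconst
    _ ≤ 3 / (8 * π) * (π * R ^ 4 / 2) := by
        apply mul_le_mul_of_nonneg_left houter (by positivity)
    _ ≤ R ^ 4 / 4 := hfinal
end

section
/- For z ∈ 𝔻 with z ≠ 0, ∫_{𝔻} g_z(ξ) g_0(ξ) dA(ξ) = (1 − |z|²(1 − log|z|))/(8π), where g_z and g_0 are the Green functions of the Laplacian on the unit disk with poles at z and 0. -/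
open MeasureTheory Metric Real intervalIntegral

lemma slit_aux (w ζ : ℂ) (hw : ‖w‖ < 1) (hζ : ‖ζ‖ ≤ 1) :
    1 - w * ζ ∈ Complex.slitPlane := by
  rw [sub_eq_add_neg]
  apply Complex.mem_slitPlane_of_norm_lt_one
  rw [norm_neg]
  calc ‖w * ζ‖ = ‖w‖ * ‖ζ‖ := by simp
  _ ≤ ‖w‖ * 1 := by nlinarith [norm_nonneg w]
  _ < 1 := by linarith

lemma circle_log_one_sub (w : ℂ) (hw : ‖w‖ < 1) :
    ∫ θ in (0:ℝ)..(2*π), Real.log (‖1 - w * Complex.exp (θ * Complex.I)‖) = 0 := by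
  set g : ℂ → ℂ := fun ζ => Complex.log (1 - w * ζ) with hg
  have hdOn : DifferentiableOn ℂ g (closedBall 0 1) := by
    intro ζ hζ
    apply DifferentiableAt.differentiableWithinAt
    apply DifferentiableAt.clog (by fun_prop)
    exact slit_aux w ζ hw (by simpa using mem_closedBall_zero_iff.mp hζ)
  have hdiff : DiffContOnCl ℂ g (ball 0 1) := by
    refine DifferentiableOn.diffContOnCl ?_
    rwa [closure_ball (0:ℂ) one_ne_zero]
  have hcauchy := hdiff.circleIntegral_sub_inv_smul (c := 0) (R := 1) (w := 0)
      (by simp)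
  rw [hg] at hcauchy
  simp only [mul_zero, sub_zero, Complex.log_one] at hcauchy
  -- hcauchy : ∮ z in C(0,1), (z - 0)⁻¹ • g z = 0
  rw [circleIntegral] at hcauchy
  simp only [deriv_circleMap, circleMap, Complex.ofReal_one, one_mul, zero_add, sub_zero,
    smul_eq_mul] at hcauchy
  -- integrand: (e^{iθ} * I) * ((e^{iθ})⁻¹ * g (e^{iθ})) = I * g(e^{iθ})
  have hsimp : ∀ θ : ℝ, (Complex.exp (θ * Complex.I) * Complex.I) *
      ((Complex.exp (θ * Complex.I))⁻¹ * Complex.log (1 - w * Complex.exp (θ * Complex.I)))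
      = Complex.I * Complex.log (1 - w * Complex.exp (θ * Complex.I)) := by
    intro θ
    have h1 : Complex.exp (θ * Complex.I) ≠ 0 := Complex.exp_ne_zero _
    field_simp
  simp only [hsimp] at hcauchy
  rw [intervalIntegral.integral_const_mul] at hcauchy
  have hI : (∫ θ in (0:ℝ)..(2*π), Complex.log (1 - w * Complex.exp (θ * Complex.I))) = 0 := by
    rw [mul_zero] at hcauchy
    rcases mul_eq_zero.mp hcauchy with h | h
    · exact absurd h Complex.I_ne_zero
    · exact h
  have hcont : Continuous fun θ : ℝ => Complex.log (1 - w * Complex.exp (θ * Complex.I)) := by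
    apply Continuous.clog (by fun_prop)
    intro θ
    exact slit_aux w _ hw (by simp [Complex.norm_exp])
  have h2pi : (0:ℝ) ≤ 2*π := by positivity
  rw [intervalIntegral.integral_of_le h2pi] at hI ⊢
  have hint : Integrable (fun θ : ℝ => Complex.log (1 - w * Complex.exp (θ * Complex.I)))
      (volume.restrict (Set.Ioc 0 (2*π))) := by
    exact (hcont.integrableOn_Ioc)
  have hre := integral_re hint
  rw [hI] at hre
  simp only [RCLike.re_to_complex, Complex.log_re, Complex.zero_re, map_zero] at hre
  exact hre

lemma nz_of_abs_lt (w ζ : ℂ) (hw : ‖w‖ < 1) (hζ : ‖ζ‖ ≤ 1) :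
    1 - w * ζ ≠ 0 := by
  intro h
  have : w * ζ = 1 := by linear_combination -h
  have h1 : ‖w * ζ‖ = 1 := by rw [this]; simp
  rw [norm_mul] at h1
  nlinarith [norm_nonneg w, norm_nonneg ζ]

lemma cont_log_one_sub (w : ℂ) (hw : ‖w‖ < 1) :
    Continuous fun θ : ℝ => Real.log (‖1 - w * Complex.exp (θ * Complex.I)‖) := by
  apply Continuous.log (continuous_norm.comp (by fun_prop))
  intro θ
  exact norm_ne_zero_iff.mpr (nz_of_abs_lt w _ hw (by simp [Complex.norm_exp]))

lemma circle_log_one_sub' (w : ℂ) (hw : ‖w‖ < 1) :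
    ∫ θ in (-π)..π, Real.log (‖1 - w * Complex.exp (θ * Complex.I)‖) = 0 := by
  have hper : Function.Periodic
      (fun θ : ℝ => Real.log (‖1 - w * Complex.exp (θ * Complex.I)‖)) (2*π) := by
    intro θ
    have h : ((θ + 2*π : ℝ) : ℂ) * Complex.I = θ * Complex.I + 2*π*Complex.I := by
      push_cast; ring
    simp only [h, Complex.exp_add, Complex.exp_two_pi_mul_I, mul_one]
  have h := hper.intervalIntegral_add_eq (-π) 0
  simp only [zero_add] at h
  have hpi : -π + 2*π = π := by ring
  rw [hpi] at h
  rw [h]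
  exact circle_log_one_sub w hw

/-- circle average of `log |r e^{iθ} - z|` -/
lemma circle_log_sub (z : ℂ) (hz0 : z ≠ 0) {r : ℝ} (hr : 0 < r)
    (hrz : r ≠ ‖z‖) :
    ∫ θ in (-π)..π, Real.log (‖r * Complex.exp (θ * Complex.I) - z‖)
      = 2*π * Real.log (max r (‖z‖)) := by
  have key : ∀ w : ℂ, ‖w‖ < 1 → ∀ M : ℝ,
      (∀ θ : ℝ, ‖(r:ℂ) * Complex.exp (θ * Complex.I) - z‖
        = M * ‖1 - w * Complex.exp (θ * Complex.I)‖) → 0 < M →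
      (∫ θ in (-π)..π, Real.log (‖r * Complex.exp (θ * Complex.I) - z‖))
        = 2*π * Real.log M := by
    intro w hw M hfac hM
    have habs : ∀ θ : ℝ, Real.log (‖(r:ℂ) * Complex.exp (θ * Complex.I) - z‖)
        = Real.log M + Real.log (‖1 - w * Complex.exp (θ * Complex.I)‖) := by
      intro θ
      rw [hfac θ, Real.log_mul (ne_of_gt hM)
        (norm_ne_zero_iff.mpr (nz_of_abs_lt w _ hw (by simp [Complex.norm_exp])))]
    simp only [habs]
    rw [intervalIntegral.integral_add (intervalIntegrable_const)
      ((cont_log_one_sub w hw).intervalIntegrable _ _)]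
    rw [circle_log_one_sub' w hw, intervalIntegral.integral_const]
    simp only [smul_eq_mul, add_zero, sub_neg_eq_add]
    ring
  rcases lt_or_gt_of_ne hrz with hlt | hgt
  · set w : ℂ := (r : ℂ) / z with hwdef
    have hw : ‖w‖ < 1 := by
      rw [hwdef, norm_div, Complex.norm_real, Real.norm_eq_abs, abs_of_pos hr, div_lt_one (norm_pos_iff.mpr hz0)]
      exact hlt
    rw [max_eq_right hlt.le]
    apply key w hw _ ?_ (norm_pos_iff.mpr hz0)
    intro θ
    have h1 : (r:ℂ) * Complex.exp (θ * Complex.I) - z = (-z) * (1 - w * Complex.exp (θ * Complex.I)) := by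
      rw [hwdef]
      field_simp
      ring
    rw [h1, norm_mul, norm_neg]
  · set w : ℂ := (starRingEnd ℂ) z / r with hwdef
    have hrC : (r : ℂ) ≠ 0 := Complex.ofReal_ne_zero.mpr (ne_of_gt hr)
    have hw : ‖w‖ < 1 := by
      rw [hwdef, norm_div, Complex.norm_real, Real.norm_eq_abs, abs_of_pos hr, Complex.norm_conj, div_lt_one hr]
      exact hgt
    rw [max_eq_left hgt.le]
    apply key w hw _ ?_ hr
    intro θ
    have h1 : ‖(r:ℂ) * Complex.exp (θ * Complex.I) - z‖
        = ‖(starRingEnd ℂ) ((r:ℂ) * Complex.exp (θ * Complex.I) - z)‖ :=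
      (Complex.norm_conj _).symm
    have he : Complex.exp (-(θ:ℂ) * Complex.I) * Complex.exp (θ * Complex.I) = 1 := by
      rw [← Complex.exp_add]
      simp
    have h2 : (starRingEnd ℂ) ((r:ℂ) * Complex.exp (θ * Complex.I) - z)
        = Complex.exp (-(θ:ℂ) * Complex.I) * ((r:ℂ) - (starRingEnd ℂ) z * Complex.exp (θ * Complex.I)) := by
      rw [map_sub, map_mul, Complex.conj_ofReal, ← Complex.exp_conj]
      have hc : (starRingEnd ℂ) ((θ:ℂ) * Complex.I) = -(θ:ℂ) * Complex.I := by
        simp [Complex.conj_ofReal]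
      rw [hc]
      linear_combination ((starRingEnd ℂ) z) * he
    have h3 : (r:ℂ) - (starRingEnd ℂ) z * Complex.exp (θ * Complex.I)
        = (r:ℂ) * (1 - w * Complex.exp (θ * Complex.I)) := by
      rw [hwdef]
      field_simp
    have h4 : ‖Complex.exp (-(θ:ℂ) * Complex.I)‖ = 1 := by
      simp [Complex.norm_exp]
    rw [h1, h2, norm_mul, h4, one_mul, h3, norm_mul, Complex.norm_real, Real.norm_eq_abs, abs_of_pos hr]

lemma int_r_log (a : ℝ) (ha : 0 < a) :
    ∫ r in (0:ℝ)..a, r * Real.log r = a^2/2 * Real.log a - a^2/4 := by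
  set F : ℝ → ℝ := fun r => r * (r * Real.log r)/2 - r^2/4 with hF
  have hFcont : Continuous F := by
    apply Continuous.sub
    · exact (continuous_id.mul Real.continuous_mul_log).div_const 2
    · fun_prop
  have hderiv : ∀ r ∈ Set.Ioo (0:ℝ) a, HasDerivWithinAt F (r * Real.log r) (Set.Ioi r) r := by
    intro r hr
    have hr0 : r ≠ 0 := ne_of_gt hr.1
    have h1 : HasDerivAt (fun x : ℝ => x * Real.log x) (Real.log r + 1) r := by
      have := (hasDerivAt_id r).mul (Real.hasDerivAt_log hr0)
      exact this.congr_deriv (by simp [hr0])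
    have h2 : HasDerivAt (fun x : ℝ => x * (x * Real.log x)) (1 * (r * Real.log r) + r * (Real.log r + 1)) r :=
      (hasDerivAt_id r).mul h1
    have h3 : HasDerivAt F (((1 * (r * Real.log r) + r * (Real.log r + 1)))/2 - (2*r)/4) r := by
      apply HasDerivAt.sub
      · exact h2.div_const 2
      · have : HasDerivAt (fun x : ℝ => x^2) (2*r) r := by
          simpa using (hasDerivAt_pow 2 r)
        exact this.div_const 4
    have h4 : ((1 * (r * Real.log r) + r * (Real.log r + 1)))/2 - (2*r)/4 = r * Real.log r := by
      ring
    rw [h4] at h3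
    exact h3.hasDerivWithinAt
  have hint : IntervalIntegrable (fun r : ℝ => r * Real.log r) volume 0 a :=
    Real.continuous_mul_log.intervalIntegrable _ _
  have := intervalIntegral.integral_eq_sub_of_hasDeriv_right_of_le (le_of_lt ha)
      hFcont.continuousOn hderiv hint
  rw [this, hF]
  simp only [Real.log_zero]
  ring

lemma int_r_log_sq (a : ℝ) (ha : 0 < a) (ha1 : a ≤ 1) :
    ∫ r in a..(1:ℝ), r * (Real.log r)^2
      = 1/4 - (a^2/2 * (Real.log a)^2 - a^2/2 * Real.log a + a^2/4) := by
  set G : ℝ → ℝ := fun r => r^2/2 * (Real.log r)^2 - r^2/2 * Real.log r + r^2/4 with hG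
  have hderiv : ∀ r ∈ Set.uIcc a (1:ℝ), HasDerivAt G (r * (Real.log r)^2) r := by
    intro r hr
    rw [Set.uIcc_of_le ha1] at hr
    have hr0 : (0:ℝ) < r := lt_of_lt_of_le ha hr.1
    have hlog := Real.hasDerivAt_log (ne_of_gt hr0)
    have hsq : HasDerivAt (fun x : ℝ => x^2) (2*r) r := by simpa using (hasDerivAt_pow 2 r)
    have h1 : HasDerivAt (fun x : ℝ => x^2/2 * (Real.log x)^2)
        ((2*r)/2 * (Real.log r)^2 + r^2/2 * (2 * Real.log r ^ 1 * r⁻¹)) r :=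
      (hsq.div_const 2).mul (hlog.pow 2)
    have h2 : HasDerivAt (fun x : ℝ => x^2/2 * Real.log x)
        ((2*r)/2 * Real.log r + r^2/2 * r⁻¹) r :=
      (hsq.div_const 2).mul hlog
    have h3 : HasDerivAt G ((2*r)/2 * (Real.log r)^2 + r^2/2 * (2 * Real.log r ^ 1 * r⁻¹)
        - ((2*r)/2 * Real.log r + r^2/2 * r⁻¹) + (2*r)/4) r :=
      (h1.sub h2).add (hsq.div_const 4)
    convert h3 using 1
    field_simp
    ring
  have hint : IntervalIntegrable (fun r : ℝ => r * (Real.log r)^2) volume a 1 := by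
    apply ContinuousOn.intervalIntegrable
    apply ContinuousOn.mul continuousOn_id
    apply ContinuousOn.pow
    apply Real.continuousOn_log.mono
    intro x hx
    rw [Set.uIcc_of_le ha1] at hx
    exact ne_of_gt (lt_of_lt_of_le ha hx.1)
  have := intervalIntegral.integral_eq_sub_of_hasDerivAt hderiv hint
  rw [this, hG]
  simp only [Real.log_one]
  ring

lemma blaschke_le (z ξ : ℂ) (hz : ‖z‖ < 1) (hξ : ‖ξ‖ ≤ 1) :
    ‖ξ - z‖ ≤ ‖1 - (starRingEnd ℂ) z * ξ‖ := by
  have key : Complex.normSq (1 - (starRingEnd ℂ) z * ξ) - Complex.normSq (ξ - z)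
      = (1 - Complex.normSq z) * (1 - Complex.normSq ξ) := by
    simp only [Complex.normSq_apply, Complex.sub_re, Complex.sub_im, Complex.mul_re,
      Complex.mul_im, Complex.one_re, Complex.one_im, Complex.conj_re, Complex.conj_im]
    ring
  have h1 : Complex.normSq z < 1 := by
    rw [← Complex.sq_norm]; nlinarith [norm_nonneg z]
  have h2 : Complex.normSq ξ ≤ 1 := by
    rw [← Complex.sq_norm]; nlinarith [norm_nonneg ξ]
  have h3 : Complex.normSq (ξ - z) ≤ Complex.normSq (1 - (starRingEnd ℂ) z * ξ) := by nlinarith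
  rw [Complex.norm_def, Complex.norm_def]
  exact Real.sqrt_le_sqrt h3

lemma G_nonneg (z ξ : ℂ) (hz : ‖z‖ < 1) (hξ : ‖ξ‖ ≤ 1) :
    0 ≤ ((1 / (2 * π)) * Real.log (‖(ξ - z) / (1 - (starRingEnd ℂ) z * ξ)‖)) *
        ((1 / (2 * π)) * Real.log (‖ξ‖)) := by
  have hden : (1 : ℂ) - (starRingEnd ℂ) z * ξ ≠ 0 :=
    nz_of_abs_lt _ ξ (by rwa [Complex.norm_conj]) hξ
  have hA : Real.log (‖(ξ - z) / (1 - (starRingEnd ℂ) z * ξ)‖) ≤ 0 := by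
    apply Real.log_nonpos (norm_nonneg _)
    rw [norm_div, div_le_one (norm_pos_iff.mpr hden)]
    exact blaschke_le z ξ hz hξ
  have hB : Real.log (‖ξ‖) ≤ 0 := Real.log_nonpos (norm_nonneg _) hξ
  have hc : (0:ℝ) < 1 / (2*π) := by positivity
  nlinarith [mul_nonneg (mul_nonneg hc.le hc.le)
    (mul_nonneg (neg_nonneg.2 hA) (neg_nonneg.2 hB))]

lemma polar_symm_exp (p : ℝ × ℝ) :
    Complex.polarCoord.symm p = (p.1 : ℂ) * Complex.exp (p.2 * Complex.I) := by
  rw [Complex.polarCoord_symm_apply, Complex.exp_mul_I, Complex.ofReal_cos, Complex.ofReal_sin]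

lemma inner_integral (z : ℂ) (hz1 : ‖z‖ < 1) (hz0 : z ≠ 0) {r : ℝ}
    (hr0 : 0 < r) (hr1 : r < 1) (hra : r ≠ ‖z‖) :
    ∫ θ in Set.Ioo (-π) π,
      r * (((1 / (2 * π)) * Real.log (‖(((r:ℂ) * Complex.exp (θ * Complex.I)) - z) /
            (1 - (starRingEnd ℂ) z * ((r:ℂ) * Complex.exp (θ * Complex.I)))‖)) *
        ((1 / (2 * π)) * Real.log (‖(r:ℂ) * Complex.exp (θ * Complex.I)‖)))
      = (1/(2*π)) * (r * Real.log r * Real.log (max r (‖z‖))) := by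
  have habsξ : ∀ θ : ℝ, ‖(r:ℂ) * Complex.exp (θ * Complex.I)‖ = r := by
    intro θ
    rw [norm_mul, Complex.norm_real, Real.norm_eq_abs, abs_of_pos hr0]
    simp [Complex.norm_exp]
  have hnum : ∀ θ : ℝ, ‖(r:ℂ) * Complex.exp (θ * Complex.I) - z‖ ≠ 0 := by
    intro θ h
    rw [norm_eq_zero, sub_eq_zero] at h
    apply hra
    rw [← h, habsξ θ]
  have hden : ∀ θ : ℝ, (1:ℂ) - (starRingEnd ℂ) z * ((r:ℂ) * Complex.exp (θ * Complex.I)) ≠ 0 := by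
    intro θ
    exact nz_of_abs_lt _ _ (by rwa [Complex.norm_conj]) (le_of_eq (habsξ θ) |>.trans hr1.le)
  have hsplit : ∀ θ : ℝ,
      r * (((1 / (2 * π)) * Real.log (‖(((r:ℂ) * Complex.exp (θ * Complex.I)) - z) /
            (1 - (starRingEnd ℂ) z * ((r:ℂ) * Complex.exp (θ * Complex.I)))‖)) *
        ((1 / (2 * π)) * Real.log (‖(r:ℂ) * Complex.exp (θ * Complex.I)‖)))
      = (r * (1/(2*π))^2 * Real.log r) *
          (Real.log (‖(r:ℂ) * Complex.exp (θ * Complex.I) - z‖)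
            - Real.log (‖1 - (starRingEnd ℂ) z * ((r:ℂ) * Complex.exp (θ * Complex.I))‖)) := by
    intro θ
    rw [norm_div, Real.log_div (hnum θ) (norm_ne_zero_iff.mpr (hden θ)), habsξ θ]
    ring
  simp only [hsplit]
  rw [MeasureTheory.integral_const_mul]
  have h1 : ∀ θ : ℝ, (starRingEnd ℂ) z * ((r:ℂ) * Complex.exp (θ * Complex.I))
      = ((starRingEnd ℂ) z * r) * Complex.exp (θ * Complex.I) := by intro θ; ring
  have hw : ‖(starRingEnd ℂ) z * r‖ < 1 := by
    rw [norm_mul, Complex.norm_conj, Complex.norm_real, Real.norm_eq_abs, abs_of_pos hr0]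
    nlinarith [norm_nonneg z]
  have hcont1 : Continuous fun θ : ℝ =>
      Real.log (‖1 - ((starRingEnd ℂ) z * r) * Complex.exp (θ * Complex.I)‖) :=
    cont_log_one_sub _ hw
  have hcont2 : Continuous fun θ : ℝ =>
      Real.log (‖(r:ℂ) * Complex.exp (θ * Complex.I) - z‖) := by
    apply Continuous.log (continuous_norm.comp (by fun_prop))
    exact fun θ => hnum θ
  have hIoo : ∀ g : ℝ → ℝ, (∫ θ in Set.Ioo (-π) π, g θ) = ∫ θ in (-π)..π, g θ := by
    intro g
    rw [intervalIntegral.integral_of_le (by linarith [Real.pi_pos]),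
      MeasureTheory.integral_Ioc_eq_integral_Ioo]
  rw [hIoo]
  rw [intervalIntegral.integral_sub (hcont2.intervalIntegrable _ _) ?_]
  swap
  · simp only [h1]
    exact (cont_log_one_sub _ hw).intervalIntegrable _ _
  have e2 : (∫ θ in (-π)..π,
      Real.log (‖1 - (starRingEnd ℂ) z * ((r:ℂ) * Complex.exp (θ * Complex.I))‖)) = 0 := by
    simp only [h1]
    exact circle_log_one_sub' _ hw
  rw [e2, circle_log_sub z hz0 hr0 hra, sub_zero]
  have hπ : π ≠ 0 := Real.pi_ne_zero
  field_simp

lemma outer_integral (a : ℝ) (ha0 : 0 < a) (ha1 : a < 1) :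
    ∫ r in Set.Ioo (0:ℝ) 1, (1/(2*π)) * (r * Real.log r * Real.log (max r a))
      = (1 - a^2 * (1 - Real.log a)) / (8*π) := by
  have hgcont : Continuous fun r : ℝ => (1/(2*π)) * (r * Real.log r * Real.log (max r a)) := by
    apply Continuous.mul continuous_const
    apply Continuous.mul Real.continuous_mul_log
    apply Continuous.log (continuous_id.max continuous_const)
    intro r
    have : a ≤ max r a := le_max_right _ _
    positivity
  have hIoo : (∫ r in Set.Ioo (0:ℝ) 1, (1/(2*π)) * (r * Real.log r * Real.log (max r a)))
      = ∫ r in (0:ℝ)..1, (1/(2*π)) * (r * Real.log r * Real.log (max r a)) := by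
    rw [intervalIntegral.integral_of_le zero_le_one, MeasureTheory.integral_Ioc_eq_integral_Ioo]
  rw [hIoo]
  rw [← intervalIntegral.integral_add_adjacent_intervals (b := a)
    (hgcont.intervalIntegrable _ _) (hgcont.intervalIntegrable _ _)]
  have e1 : (∫ r in (0:ℝ)..a, (1/(2*π)) * (r * Real.log r * Real.log (max r a)))
      = ((1/(2*π)) * Real.log a) * (a^2/2 * Real.log a - a^2/4) := by
    rw [intervalIntegral.integral_congr (g := fun r => ((1/(2*π)) * Real.log a) * (r * Real.log r))
      ?_]
    · rw [intervalIntegral.integral_const_mul, int_r_log a ha0]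
    · intro r hr
      rw [Set.uIcc_of_le ha0.le] at hr
      simp only [max_eq_right hr.2]
      ring
  have e2 : (∫ r in a..(1:ℝ), (1/(2*π)) * (r * Real.log r * Real.log (max r a)))
      = (1/(2*π)) * (1/4 - (a^2/2 * (Real.log a)^2 - a^2/2 * Real.log a + a^2/4)) := by
    rw [intervalIntegral.integral_congr (g := fun r => (1/(2*π)) * (r * (Real.log r)^2)) ?_]
    · rw [intervalIntegral.integral_const_mul, int_r_log_sq a ha0 ha1.le]
    · intro r hr
      rw [Set.uIcc_of_le ha1.le] at hr
      simp only [max_eq_left hr.1]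
      ring
  rw [e1, e2]
  have hπ : π ≠ 0 := Real.pi_ne_zero
  field_simp
  ring

/-- For z ∈ 𝔻 with z ≠ 0, ∫_𝔻 g_z g_0 dA = (1 − |z|²(1 − log|z|))/(8π). -/
theorem green_fn_product_integral (z : ℂ) (hz : z ∈ ball (0 : ℂ) 1) (hz0 : z ≠ 0) :
    ∫ ξ in ball (0 : ℂ) 1,
        ((1 / (2 * π)) * Real.log ‖(ξ - z) / (1 - (starRingEnd ℂ) z * ξ)‖) *
          ((1 / (2 * π)) * Real.log ‖ξ‖)
      = (1 - ‖z‖ ^ 2 * (1 - Real.log ‖z‖)) / (8 * π) := by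
  have ha1 : ‖z‖ < 1 := by simpa using mem_ball_zero_iff.mp hz
  have ha0 : 0 < ‖z‖ := norm_pos_iff.mpr hz0
  set a := ‖z‖ with ha
  set G : ℂ → ℝ := fun ξ =>
    ((1 / (2 * π)) * Real.log (‖(ξ - z) / (1 - (starRingEnd ℂ) z * ξ)‖)) *
      ((1 / (2 * π)) * Real.log (‖ξ‖)) with hG
  set f : ℝ × ℝ → ℝ := fun p => p.1 * G ((p.1 : ℂ) * Complex.exp (p.2 * Complex.I)) with hf
  set S : Set (ℝ × ℝ) := Set.Ioo (0:ℝ) 1 ×ˢ Set.Ioo (-π) π with hSdef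
  have hSmeas : MeasurableSet S := measurableSet_Ioo.prod measurableSet_Ioo
  have hSsub : S ⊆ polarCoord.target := fun p hp => ⟨hp.1.1, hp.2⟩
  -- Step A : polar coordinates
  have stepA : (∫ ξ in ball (0:ℂ) 1, G ξ) = ∫ p in S, f p := by
    rw [← MeasureTheory.integral_indicator measurableSet_ball]
    rw [← Complex.integral_comp_polarCoord_symm]
    rw [MeasureTheory.setIntegral_congr_fun polarCoord.open_target.measurableSet
      (g := fun p => Set.indicator S f p) ?_]
    · rw [MeasureTheory.setIntegral_indicator hSmeas,
        Set.inter_eq_self_of_subset_right hSsub]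
    · intro p hp
      obtain ⟨hp1, hp2⟩ := hp
      rw [Set.mem_Ioi] at hp1
      simp only [polar_symm_exp]
      by_cases h : p.1 < 1
      · have hmem : (p.1 : ℂ) * Complex.exp (p.2 * Complex.I) ∈ ball (0:ℂ) 1 := by
          rw [mem_ball_zero_iff]
          calc ‖(p.1 : ℂ) * Complex.exp (p.2 * Complex.I)‖
              = ‖(p.1 : ℂ) * Complex.exp (p.2 * Complex.I)‖ := rfl
          _ = |p.1| := by rw [norm_mul, Complex.norm_real, Real.norm_eq_abs]; simp [Complex.norm_exp]
          _ < 1 := by rw [abs_of_pos hp1]; exact h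
        rw [Set.indicator_of_mem hmem, Set.indicator_of_mem (by exact ⟨⟨hp1, h⟩, hp2⟩)]
        simp [hf, smul_eq_mul]
      · have hnmem : (p.1 : ℂ) * Complex.exp (p.2 * Complex.I) ∉ ball (0:ℂ) 1 := by
          rw [mem_ball_zero_iff]
          push_neg
          calc (1:ℝ) ≤ p.1 := not_lt.mp h
          _ = ‖(p.1 : ℂ) * Complex.exp (p.2 * Complex.I)‖ := by
              rw [norm_mul, Complex.norm_real, Real.norm_eq_abs, abs_of_pos hp1]; simp [Complex.norm_exp]
          _ = ‖(p.1 : ℂ) * Complex.exp (p.2 * Complex.I)‖ := rfl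
        rw [Set.indicator_of_notMem hnmem, Set.indicator_of_notMem (by
          intro hmem
          exact h hmem.1.2)]
        simp
  rw [stepA, MeasureTheory.Measure.volume_eq_prod]
  -- auxiliary facts
  have hπ : π ≠ 0 := Real.pi_ne_zero
  have habsξ : ∀ (r θ : ℝ), 0 < r → ‖(r:ℂ) * Complex.exp (θ * Complex.I)‖ = r := by
    intro r θ hr
    rw [norm_mul, Complex.norm_real, Real.norm_eq_abs, abs_of_pos hr]
    simp [Complex.norm_exp]
  have hmeas : Measurable f := by
    apply Measurable.mul measurable_fst
    have hξ : Measurable fun p : ℝ × ℝ => (p.1 : ℂ) * Complex.exp (p.2 * Complex.I) := by fun_prop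
    apply Measurable.mul
    · apply Measurable.mul measurable_const
      apply Real.measurable_log.comp
      apply continuous_norm.measurable.comp
      apply Measurable.div
      · fun_prop
      · fun_prop
    · apply Measurable.mul measurable_const
      apply Real.measurable_log.comp
      exact continuous_norm.measurable.comp hξ
  have hcontg : Continuous fun r : ℝ => (1/(2*π)) * (r * Real.log r * Real.log (max r a)) := by
    apply Continuous.mul continuous_const
    apply Continuous.mul Real.continuous_mul_log
    apply Continuous.log (continuous_id.max continuous_const)
    intro r
    have : a ≤ max r a := le_max_right _ _
    positivity
  have hae : ∀ᵐ r ∂(volume.restrict (Set.Ioo (0:ℝ) 1)), r ∈ Set.Ioo (0:ℝ) 1 ∧ r ≠ a := by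
    have h1 : ∀ᵐ r ∂(volume : Measure ℝ), r ≠ a := by
      rw [MeasureTheory.ae_iff]
      have : {r : ℝ | ¬ r ≠ a} = {a} := by ext r; simp
      rw [this]
      exact measure_singleton a
    exact (MeasureTheory.ae_restrict_mem measurableSet_Ioo).and
      (MeasureTheory.ae_restrict_of_ae h1)
  have hnonneg : ∀ r ∈ Set.Ioo (0:ℝ) 1, ∀ θ : ℝ, 0 ≤ f (r, θ) := by
    intro r hr θ
    apply mul_nonneg hr.1.le
    apply G_nonneg z _ ha1
    rw [habsξ r θ hr.1]
    exact hr.2.le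
  have hslice_cont : ∀ r ∈ Set.Ioo (0:ℝ) 1, r ≠ a → Continuous fun θ : ℝ => f (r, θ) := by
    intro r hr hra
    have he : Continuous fun θ : ℝ => (r:ℂ) * Complex.exp (θ * Complex.I) := by fun_prop
    have hden : ∀ θ : ℝ, (1:ℂ) - (starRingEnd ℂ) z * ((r:ℂ) * Complex.exp (θ * Complex.I)) ≠ 0 := by
      intro θ
      exact nz_of_abs_lt _ _ (by rwa [Complex.norm_conj]) (by rw [habsξ r θ hr.1]; exact hr.2.le)
    have hnum : ∀ θ : ℝ, (r:ℂ) * Complex.exp (θ * Complex.I) - z ≠ 0 := by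
      intro θ h
      rw [sub_eq_zero] at h
      exact hra (by rw [ha, ← h, habsξ r θ hr.1])
    apply Continuous.mul continuous_const
    apply Continuous.mul
    · apply Continuous.mul continuous_const
      apply Continuous.log
      · exact continuous_norm.comp ((he.sub continuous_const).div
          (continuous_const.sub (continuous_const.mul he)) hden)
      · intro θ
        exact norm_ne_zero_iff.mpr (div_ne_zero (hnum θ) (hden θ))
    · apply Continuous.mul continuous_const
      apply Continuous.log (continuous_norm.comp he)
      intro θ
      simp only [Function.comp_apply]
      rw [habsξ r θ hr.1]
      exact ne_of_gt hr.1
  have hinner : ∀ r ∈ Set.Ioo (0:ℝ) 1, r ≠ a →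
      (∫ θ in Set.Ioo (-π) π, f (r, θ)) = (1/(2*π)) * (r * Real.log r * Real.log (max r a)) := by
    intro r hr hra
    have := inner_integral z ha1 hz0 hr.1 hr.2 (by rwa [ha] at hra)
    simpa [hf, hG, ha] using this
  have hint : IntegrableOn f S ((volume : Measure ℝ).prod volume) := by
    rw [hSdef, IntegrableOn, ← MeasureTheory.Measure.prod_restrict]
    refine (MeasureTheory.integrable_prod_iff hmeas.aestronglyMeasurable).mpr ⟨?_, ?_⟩
    · filter_upwards [hae] with r hr
      exact ((hslice_cont r hr.1 hr.2).integrableOn_Ioc).mono_set Set.Ioo_subset_Ioc_self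
    · have hg_int : Integrable (fun r : ℝ => (1/(2*π)) * (r * Real.log r * Real.log (max r a)))
          (volume.restrict (Set.Ioo (0:ℝ) 1)) :=
        (hcontg.integrableOn_Icc).mono_set Set.Ioo_subset_Icc_self
      apply hg_int.congr
      filter_upwards [hae] with r hr
      have h1 : (fun θ : ℝ => ‖f (r, θ)‖) = fun θ => f (r, θ) :=
        funext fun θ => Real.norm_of_nonneg (hnonneg r hr.1 θ)
      rw [h1, hinner r hr.1 hr.2]
  rw [MeasureTheory.setIntegral_prod f hint]
  rw [MeasureTheory.setIntegral_congr_ae measurableSet_Ioo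
    (g := fun r : ℝ => (1/(2*π)) * (r * Real.log r * Real.log (max r a))) ?_]
  · rw [outer_integral a ha0 ha1, ha]
  · filter_upwards [show ∀ᵐ r ∂(volume : Measure ℝ), r ≠ a by
      rw [MeasureTheory.ae_iff]
      have : {r : ℝ | ¬ r ≠ a} = {a} := by ext r; simp
      rw [this]
      exact measure_singleton a] with r hra hr
    exact hinner r hr hra
end

section
/- For all x ∈ [0,1], 0 ≤ I₀(x)/I₀(1) − (1 − (1 − x²)/4) ≤ 0.0399, where I₀ is the modified Bessel function of the first kind of order 0. -/
/-- The modified Bessel function of the first kind of order zero. -/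
noncomputable def besselI0 (x : ℝ) : ℝ := ∑' k : ℕ, (x / 2) ^ (2 * k) / ((Nat.factorial k : ℝ)) ^ 2

namespace BesselAux

/-- The k-th term of the series. -/
noncomputable def t (x : ℝ) (k : ℕ) : ℝ := (x / 2) ^ (2 * k) / ((Nat.factorial k : ℝ)) ^ 2

lemma besselI0_eq (x : ℝ) : besselI0 x = ∑' k, t x k := rfl

lemma fact_one_le (k : ℕ) : (1:ℝ) ≤ ((Nat.factorial k : ℝ)) ^ 2 := by
  have h : 1 ≤ Nat.factorial k := (Nat.factorial_pos k)
  have : (1:ℝ) ≤ (Nat.factorial k : ℝ) := by exact_mod_cast h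
  nlinarith

lemma t_nonneg (x : ℝ) (k : ℕ) : 0 ≤ t x k := by
  unfold t; rw [pow_mul]; positivity

lemma t_eq (x : ℝ) (k : ℕ) : t x k = (x^2)^k / (4:ℝ)^k / ((Nat.factorial k : ℝ)) ^ 2 := by
  unfold t
  rw [pow_mul, show (x/2)^2 = x^2/4 by ring, div_pow]

lemma t_scale (x : ℝ) (k : ℕ) : t x k = (x^2)^k * t 1 k := by
  rw [t_eq, t_eq]
  ring

lemma t_le_geom (x : ℝ) (hx2 : x^2 ≤ 1) (k : ℕ) : t x k ≤ (1/4:ℝ)^k := by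
  rw [t_eq]
  have h0 : (0:ℝ) ≤ x^2 := sq_nonneg x
  have h1 : (x^2)^k ≤ 1 := pow_le_one₀ h0 hx2
  have h2 : (x^2)^k / (4:ℝ)^k ≤ 1/(4:ℝ)^k := by
    apply div_le_div_of_nonneg_right <;> try positivity
    exact h1
  calc (x^2)^k / (4:ℝ)^k / ((Nat.factorial k : ℝ)) ^ 2
      ≤ (x^2)^k / (4:ℝ)^k := by
        apply div_le_self (by positivity) (fact_one_le k)
    _ ≤ 1/(4:ℝ)^k := h2
    _ = (1/4:ℝ)^k := by rw [div_pow]; norm_num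

lemma summable_t (x : ℝ) (hx2 : x^2 ≤ 1) : Summable (t x) :=
  Summable.of_nonneg_of_le (t_nonneg x) (t_le_geom x hx2)
    (summable_geometric_of_lt_one (by norm_num) (by norm_num))

lemma summable_t1 : Summable (t 1) := summable_t 1 (by norm_num)

lemma summable_tail (x : ℝ) (hx2 : x^2 ≤ 1) : Summable (fun k => t x (k + 2)) :=
  (summable_nat_add_iff 2).mpr (summable_t x hx2)

lemma fact_ge (k : ℕ) : (2:ℝ) * 3^k ≤ (Nat.factorial (k+2) : ℝ) := by
  induction k with
  | zero => norm_num [Nat.factorial]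
  | succ n ih =>
      have h : Nat.factorial (n+3) = (n+3) * Nat.factorial (n+2) := rfl
      rw [h]
      push_cast
      have h3 : (3:ℝ) ≤ (n:ℝ) + 3 := by linarith [Nat.cast_nonneg (α := ℝ) n]
      rw [pow_succ]
      nlinarith [ih, pow_pos (by norm_num : (0:ℝ) < 3) n]

lemma t1_tail_le (k : ℕ) : t 1 (k+2) ≤ (1/64:ℝ) * (1/36)^k := by
  rw [t_eq]
  have hf := fact_ge k
  have h3 : (0:ℝ) < 3^k := by positivity
  have hfsq : (4:ℝ) * 9^k ≤ ((Nat.factorial (k+2) : ℝ))^2 := by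
    have h9 : (9:ℝ)^k = 3^k * 3^k := by rw [← mul_pow]; norm_num
    nlinarith
  have hnum : ((1:ℝ)^2)^(k+2) / (4:ℝ)^(k+2) = (1/4:ℝ)^(k+2) := by
    rw [div_pow]; norm_num
  rw [hnum]
  rw [div_le_iff₀ (by positivity)]
  have key : (1/64:ℝ) * (1/36)^k * (4 * 9^k) ≤ (1/64:ℝ) * (1/36)^k * ((Nat.factorial (k+2) : ℝ))^2 := by
    apply mul_le_mul_of_nonneg_left hfsq (by positivity)
  refine le_trans (le_of_eq ?_) key
  have hA : (1/36:ℝ)^k * 9^k = (1/4:ℝ)^k := by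
    rw [← mul_pow]; norm_num
  rw [pow_add]
  linear_combination (-1/16:ℝ) * hA

lemma weighted_tail_le (k : ℕ) : ((k:ℝ)+2) * t 1 (k+2) ≤ (1/32:ℝ) * (1/18)^k := by
  have hk : ((k:ℝ)+2) ≤ 2 * 2^k := by
    have h := Nat.lt_two_pow_self (n := k+1)
    have h' : (k+2 : ℕ) ≤ 2^(k+1) := h
    have : ((k:ℝ)+2) ≤ (2:ℝ)^(k+1) := by exact_mod_cast h'
    rw [pow_succ] at this
    linarith
  have h1 := t1_tail_le k
  have h2 : ((k:ℝ)+2) * t 1 (k+2) ≤ (2 * 2^k) * ((1/64:ℝ) * (1/36)^k) := by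
    apply mul_le_mul hk h1 (t_nonneg 1 (k+2)) (by positivity)
  have hB : (2:ℝ)^k * (1/36)^k = (1/18:ℝ)^k := by rw [← mul_pow]; norm_num
  have heq : 2 * (2:ℝ)^k * (1/64*(1/36)^k) = 1/32*(1/18:ℝ)^k := by
    linear_combination (1/32:ℝ) * hB
  linarith [h2, heq]

lemma tail_sum_lb : (37/2304 : ℝ) ≤ ∑' k, t 1 (k+2) := by
  have hs := summable_tail 1 (by norm_num)
  have h := Summable.sum_le_tsum (Finset.range 2) (fun i _ => t_nonneg 1 (i+2)) hs
  refine le_trans ?_ h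
  rw [Finset.sum_range_succ, Finset.sum_range_one]
  rw [t_eq, t_eq]
  norm_num [Nat.factorial]

/-- Lower bound: I₀(1) * (3+x²)/4 ≤ I₀(x). -/
lemma key_lower (x : ℝ) (hx0 : 0 ≤ x) (hx1 : x ≤ 1) :
    besselI0 1 * ((3 + x^2)/4) ≤ besselI0 x := by
  have hx2 : x^2 ≤ 1 := by nlinarith
  have hsx : Summable (t x) := summable_t x hx2
  have hs1 : Summable (t 1) := summable_t1
  set q : ℝ := (3 + x^2)/4 with hq
  set g : ℕ → ℝ := fun k => t x k - q * t 1 k with hg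
  have hsg : Summable g := hsx.sub (hs1.mul_left q)
  have hdecomp : besselI0 x - q * besselI0 1 = ∑' k, g k := by
    rw [besselI0_eq, besselI0_eq, ← tsum_mul_left]
    exact (Summable.tsum_sub hsx (hs1.mul_left q)).symm
  have hsplit : ∑' k, g k = (g 0 + g 1) + ∑' k, g (k+2) := by
    rw [← Summable.sum_add_tsum_nat_add 2 hsg]
    rw [Finset.sum_range_succ, Finset.sum_range_one]
  -- termwise tail bound
  have hterm : ∀ k : ℕ, -((1 - x^2)) * ((1/32:ℝ) * (1/18)^k) ≤ g (k+2) := by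
    intro k
    have hts : t x (k+2) = (x^2)^(k+2) * t 1 (k+2) := t_scale x (k+2)
    have hbern : 1 + ((k:ℝ)+2) * (x^2 - 1) ≤ (x^2)^(k+2) := by
      have h := one_add_mul_le_pow (a := x^2 - 1) (by nlinarith) (k+2)
      have h1 : 1 + (x^2 - 1) = x^2 := by ring
      rw [h1] at h
      exact_mod_cast h
    have hq1 : 1 - q = (1 - x^2)/4 := by rw [hq]; ring
    have hterm1 : t 1 (k+2) * (-(((k:ℝ)+2) * (1 - x^2))) ≤ g (k+2) := by
      simp only [hg, hts]
      have ht0 := t_nonneg 1 (k+2)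
      nlinarith [mul_le_mul_of_nonneg_left hbern ht0]
    refine le_trans ?_ hterm1
    have hw := weighted_tail_le k
    have hy : 0 ≤ 1 - x^2 := by linarith
    nlinarith [t_nonneg 1 (k+2), mul_le_mul_of_nonneg_left hw hy]
  have hsum_lb : Summable (fun k => -((1 - x^2)) * ((1/32:ℝ) * (1/18)^k)) := by
    apply Summable.mul_left
    exact (summable_geometric_of_lt_one (by norm_num) (by norm_num)).mul_left _
  have htail : -((1 - x^2)) * (9/272 : ℝ) ≤ ∑' k, g (k+2) := by
    have h := Summable.tsum_le_tsum hterm hsum_lb ((summable_nat_add_iff 2).mpr hsg)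
    refine le_trans (le_of_eq ?_) h
    rw [tsum_mul_left, tsum_mul_left, tsum_geometric_of_lt_one (by norm_num) (by norm_num)]
    norm_num
  have hg0 : g 0 = 1 - q := by
    simp only [hg]; rw [t_eq, t_eq]; norm_num [Nat.factorial]
  have hg1 : g 1 = x^2/4 - q/4 := by
    simp only [hg]; rw [t_eq, t_eq]; norm_num [Nat.factorial]; ring
  have hfinal : 0 ≤ besselI0 x - q * besselI0 1 := by
    rw [hdecomp, hsplit, hg0, hg1, hq]
    nlinarith [htail, sq_nonneg x, hx2]
  linarith [hfinal]

/-- Upper bound: I₀(x) ≤ I₀(1) * ((3+x²)/4 + 399/10000). -/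
lemma key_upper (x : ℝ) (hx0 : 0 ≤ x) (hx1 : x ≤ 1) :
    besselI0 x ≤ besselI0 1 * ((3 + x^2)/4 + 399/10000) := by
  have hx2 : x^2 ≤ 1 := by nlinarith
  have hsx : Summable (t x) := summable_t x hx2
  have hs1 : Summable (t 1) := summable_t1
  set r : ℝ := (3 + x^2)/4 + 399/10000 with hr
  set g : ℕ → ℝ := fun k => t x k - r * t 1 k with hg
  have hsg : Summable g := hsx.sub (hs1.mul_left r)
  have hdecomp : besselI0 x - r * besselI0 1 = ∑' k, g k := by
    rw [besselI0_eq, besselI0_eq, ← tsum_mul_left]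
    exact (Summable.tsum_sub hsx (hs1.mul_left r)).symm
  have hsplit : ∑' k, g k = (g 0 + g 1) + ∑' k, g (k+2) := by
    rw [← Summable.sum_add_tsum_nat_add 2 hsg]
    rw [Finset.sum_range_succ, Finset.sum_range_one]
  set m : ℝ := x^2 - r with hm
  have hm0 : m ≤ 0 := by rw [hm, hr]; nlinarith
  have hterm : ∀ k : ℕ, g (k+2) ≤ m * t 1 (k+2) := by
    intro k
    have hts : t x (k+2) = (x^2)^(k+2) * t 1 (k+2) := t_scale x (k+2)
    have hpow : (x^2)^(k+2) ≤ x^2 := by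
      calc (x^2)^(k+2) ≤ (x^2)^1 := pow_le_pow_of_le_one (sq_nonneg x) hx2 (by omega)
        _ = x^2 := pow_one _
    simp only [hg, hts, hm]
    have ht0 := t_nonneg 1 (k+2)
    nlinarith [mul_le_mul_of_nonneg_right hpow ht0]
  have hsm : Summable (fun k => m * t 1 (k+2)) :=
    (summable_tail 1 (by norm_num)).mul_left m
  have htail : ∑' k, g (k+2) ≤ m * (37/2304 : ℝ) := by
    have h := Summable.tsum_le_tsum hterm ((summable_nat_add_iff 2).mpr hsg) hsm
    refine le_trans h ?_
    rw [tsum_mul_left]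
    exact mul_le_mul_of_nonpos_left tail_sum_lb hm0
  have hg0 : g 0 = 1 - r := by
    simp only [hg]; rw [t_eq, t_eq]; norm_num [Nat.factorial]
  have hg1 : g 1 = x^2/4 - r/4 := by
    simp only [hg]; rw [t_eq, t_eq]; norm_num [Nat.factorial]; ring
  have hfinal : besselI0 x - r * besselI0 1 ≤ 0 := by
    rw [hdecomp, hsplit, hg0, hg1]
    have hmx : m = x^2 - r := hm
    rw [hr] at hmx ⊢
    nlinarith [htail, sq_nonneg x, hx2]
  linarith [hfinal]

lemma c_ge_one : (1:ℝ) ≤ besselI0 1 := by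
  have hs1 : Summable (t 1) := summable_t1
  have h := Summable.le_tsum hs1 0 (fun i _ => t_nonneg 1 i)
  rw [besselI0_eq]
  refine le_trans (le_of_eq ?_) h
  rw [t_eq]; norm_num [Nat.factorial]

end BesselAux

/-- For x ∈ [0,1], 0 ≤ I₀(x)/I₀(1) − (1 − (1 − x²)/4) ≤ 0.0399. -/
theorem first_order_error_bound (x : ℝ) (hx : x ∈ Set.Icc (0 : ℝ) 1) :
    0 ≤ besselI0 x / besselI0 1 - (1 - (1 - x ^ 2) / 4) ∧
      besselI0 x / besselI0 1 - (1 - (1 - x ^ 2) / 4) ≤ 0.0399 := by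
  obtain ⟨hx0, hx1⟩ := hx
  have hc : (1:ℝ) ≤ besselI0 1 := BesselAux.c_ge_one
  have hc0 : (0:ℝ) < besselI0 1 := by linarith
  have hL := BesselAux.key_lower x hx0 hx1
  have hU := BesselAux.key_upper x hx0 hx1
  constructor
  · have h : (3 + x^2)/4 ≤ besselI0 x / besselI0 1 := by
      rw [le_div_iff₀ hc0]
      linarith [hL]
    linarith [h]
  · have h : besselI0 x / besselI0 1 ≤ (3 + x^2)/4 + 399/10000 := by
      rw [div_le_iff₀ hc0]
      linarith [hU]
    norm_num
    linarith [h]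
end

section
/- On the unit disk, the function φ(z) = 1 − (1−|z|²)/4 + (|z|⁴ − 4|z|² + 3)/64 approximates the solution I₀(|z|)/I₀(1) of the Helmholtz Dirichlet problem with error at most 0.0071 in sup norm; in particular |I₀(x)/I₀(1) − (1 − (1−x²)/4 + (x⁴ − 4x² + 3)/64)| ≤ 0.0071 for all x ∈ [0,1]. -/
private lemma bessel_term_le (x : ℝ) (hx0 : 0 ≤ x) (hx1 : x ≤ 1) (k N : ℕ) :
    (x/2)^(2*(k+N))/((Nat.factorial (k+N) : ℝ))^2 ≤
      x^(2*N)/(4^N*((Nat.factorial N : ℝ))^2) * (1/4)^k := by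
  have h2 : ((x/2)^2)^k ≤ (1/4:ℝ)^k :=
    pow_le_pow_left₀ (sq_nonneg _) (by nlinarith) k
  have h3 : ((Nat.factorial N : ℝ))^2 ≤ ((Nat.factorial (k+N) : ℝ))^2 := by
    have h := Nat.factorial_le (Nat.le_add_left N k)
    have h' : (Nat.factorial N : ℝ) ≤ (Nat.factorial (k+N) : ℝ) := by exact_mod_cast h
    exact pow_le_pow_left₀ (by positivity) h' 2
  have hNpos : (0:ℝ) < ((Nat.factorial N : ℝ))^2 := by positivity
  have hxN : (x/2)^(2*N) = x^(2*N)/4^N := by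
    rw [div_pow, show (4:ℝ)^N = 2^(2*N) by rw [pow_mul]; norm_num]
  have hnum : (x/2)^(2*(k+N)) ≤ (1/4:ℝ)^k * (x^(2*N)/4^N) := by
    have he : (x/2)^(2*(k+N)) = ((x/2)^2)^k * (x/2)^(2*N) := by
      rw [show 2*(k+N) = 2*k + 2*N by ring, pow_add, pow_mul]
    rw [he, hxN]
    exact mul_le_mul_of_nonneg_right h2 (by positivity)
  calc (x/2)^(2*(k+N))/((Nat.factorial (k+N) : ℝ))^2
      ≤ ((1/4:ℝ)^k * (x^(2*N)/4^N)) / ((Nat.factorial N : ℝ))^2 :=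
        div_le_div₀ (by positivity) hnum hNpos h3
    _ = x^(2*N)/(4^N*((Nat.factorial N : ℝ))^2) * (1/4)^k := by ring

private lemma besselI0_bounds (x : ℝ) (hx0 : 0 ≤ x) (hx1 : x ≤ 1) (N : ℕ) :
    (∑ k ∈ Finset.range N, (x/2)^(2*k)/((Nat.factorial k : ℝ))^2) ≤ besselI0 x ∧
    besselI0 x ≤ (∑ k ∈ Finset.range N, (x/2)^(2*k)/((Nat.factorial k : ℝ))^2)
      + x^(2*N)/(4^N*((Nat.factorial N : ℝ))^2)*(4/3) := by
  set f : ℕ → ℝ := fun k => (x/2)^(2*k)/((Nat.factorial k : ℝ))^2 with hf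
  have hle : ∀ k, f k ≤ (1/4:ℝ)^k := by
    intro k
    have := bessel_term_le x hx0 hx1 k 0
    simpa using this
  have hsum : Summable f :=
    Summable.of_nonneg_of_le (fun k => by positivity) hle
      (summable_geometric_of_lt_one (by norm_num) (by norm_num))
  have hb : besselI0 x = ∑' k, f k := rfl
  have hsplit := Summable.sum_add_tsum_nat_add N hsum
  have htail_nonneg : 0 ≤ ∑' i, f (i+N) := tsum_nonneg (fun i => by positivity)
  have htail_summable : Summable (fun i => f (i+N)) := (summable_nat_add_iff N).2 hsum
  have hgeo : Summable (fun k : ℕ => x^(2*N)/(4^N*((Nat.factorial N : ℝ))^2) * (1/4:ℝ)^k) :=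
    (summable_geometric_of_lt_one (by norm_num) (by norm_num)).mul_left _
  have htail_le : ∑' i, f (i+N) ≤ x^(2*N)/(4^N*((Nat.factorial N : ℝ))^2)*(4/3) := by
    calc ∑' i, f (i+N)
        ≤ ∑' k : ℕ, x^(2*N)/(4^N*((Nat.factorial N : ℝ))^2) * (1/4:ℝ)^k :=
          Summable.tsum_le_tsum (fun k => bessel_term_le x hx0 hx1 k N) htail_summable hgeo
      _ = x^(2*N)/(4^N*((Nat.factorial N : ℝ))^2)*(4/3) := by
          rw [tsum_mul_left, tsum_geometric_of_lt_one (by norm_num) (by norm_num)]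
          norm_num
  constructor
  · rw [hb, ← hsplit]; linarith
  · rw [hb, ← hsplit]; linarith

private lemma poly_upper (q : ℝ) (h0 : 0 ≤ q) (h1 : q ≤ 1) :
    1 + q/4 + q^2/64 + q^3/2304 + q^4/110592 ≤
      (186689/147456) * (1 - (1 - q)/4 + (q^2 - 4*q + 3)/64) + 0.0071 * (186689/147456) := by
  nlinarith [mul_nonneg h0 (sub_nonneg.2 h1), mul_nonneg (mul_nonneg h0 h0) (sub_nonneg.2 h1),
    mul_nonneg (mul_nonneg (mul_nonneg h0 h0) h0) (sub_nonneg.2 h1), sq_nonneg q, sq_nonneg (1-q)]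

private lemma poly_lower (q : ℝ) (h0 : 0 ≤ q) (h1 : q ≤ 1) :
    (186689/147456 + 1/11059200) * (1 - (1 - q)/4 + (q^2 - 4*q + 3)/64) ≤
      1 + q/4 + q^2/64 + q^3/2304 + 0.0071 * (186689/147456) := by
  nlinarith [mul_nonneg h0 (sub_nonneg.2 h1), mul_nonneg (mul_nonneg h0 h0) (sub_nonneg.2 h1),
    sq_nonneg q, sq_nonneg (1-q)]

/-- For x ∈ [0,1],
|I₀(x)/I₀(1) − (1 − (1−x²)/4 + (x⁴ − 4x² + 3)/64)| ≤ 0.0071. -/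
theorem second_order_error_bound (x : ℝ) (hx : x ∈ Set.Icc (0 : ℝ) 1) :
    |besselI0 x / besselI0 1 - (1 - (1 - x ^ 2) / 4 + (x ^ 4 - 4 * x ^ 2 + 3) / 64)| ≤ 0.0071 := by
  obtain ⟨hx0, hx1⟩ := hx
  have h4 := besselI0_bounds x hx0 hx1 4
  have h5 := besselI0_bounds 1 zero_le_one le_rfl 5
  have e4 : (∑ k ∈ Finset.range 4, (x/2)^(2*k)/((Nat.factorial k : ℝ))^2)
      = 1 + x^2/4 + x^4/64 + x^6/2304 := by
    simp [Finset.sum_range_succ, Nat.factorial]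
    ring
  have e5 : (∑ k ∈ Finset.range 5, ((1:ℝ)/2)^(2*k)/((Nat.factorial k : ℝ))^2)
      = 186689/147456 := by
    simp [Finset.sum_range_succ, Nat.factorial]
    norm_num
  rw [e4] at h4
  rw [e5] at h5
  have hA_lo : (186689:ℝ)/147456 ≤ besselI0 1 := h5.1
  have hA_hi : besselI0 1 ≤ 186689/147456 + 1/11059200 := by
    have := h5.2; norm_num [Nat.factorial] at this ⊢; linarith
  have hA_pos : 0 < besselI0 1 := by linarith
  have hx2 : x^2 ≤ 1 := by nlinarith
  have hP_pos : (0:ℝ) < 1 - (1 - x ^ 2) / 4 + (x ^ 4 - 4 * x ^ 2 + 3) / 64 := by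
    nlinarith [sq_nonneg x, sq_nonneg (x^2)]
  have hfx_lo : 1 + x^2/4 + x^4/64 + x^6/2304 ≤ besselI0 x := h4.1
  have hfx_hi : besselI0 x ≤ 1 + x^2/4 + x^4/64 + x^6/2304 + x^8/110592 := by
    have := h4.2
    have he : x^(2*4)/(4^4*((Nat.factorial 4 : ℝ))^2)*(4/3) = x^8/110592 := by
      norm_num [Nat.factorial]; ring
    rw [he] at this; exact this
  have hAPlo : (186689:ℝ)/147456 * (1 - (1 - x ^ 2) / 4 + (x ^ 4 - 4 * x ^ 2 + 3) / 64)
      ≤ besselI0 1 * (1 - (1 - x ^ 2) / 4 + (x ^ 4 - 4 * x ^ 2 + 3) / 64) :=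
    mul_le_mul_of_nonneg_right hA_lo hP_pos.le
  have hAPhi : besselI0 1 * (1 - (1 - x ^ 2) / 4 + (x ^ 4 - 4 * x ^ 2 + 3) / 64)
      ≤ ((186689:ℝ)/147456 + 1/11059200) * (1 - (1 - x ^ 2) / 4 + (x ^ 4 - 4 * x ^ 2 + 3) / 64) :=
    mul_le_mul_of_nonneg_right hA_hi hP_pos.le
  have hpu := poly_upper (x^2) (sq_nonneg x) hx2
  have hpl := poly_lower (x^2) (sq_nonneg x) hx2
  have key : |besselI0 x - besselI0 1 * (1 - (1 - x ^ 2) / 4 + (x ^ 4 - 4 * x ^ 2 + 3) / 64)|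
      ≤ 0.0071 * besselI0 1 := by
    rw [abs_le]
    constructor
    · linarith [hpl, hAPhi, hfx_lo, hA_lo]
    · linarith [hpu, hAPlo, hfx_hi, hA_lo]
  have hrw : (besselI0 x - besselI0 1 * (1 - (1 - x ^ 2) / 4 + (x ^ 4 - 4 * x ^ 2 + 3) / 64)) / besselI0 1
      = besselI0 x / besselI0 1 - (1 - (1 - x ^ 2) / 4 + (x ^ 4 - 4 * x ^ 2 + 3) / 64) := by
    rw [sub_div, mul_div_cancel_left₀ _ hA_pos.ne']
  rw [← hrw, abs_div, abs_of_pos hA_pos, div_le_iff₀ hA_pos]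
  exact key
end
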